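/- arXiv:1210.2995 — 4 statements merged into one kernel-verified Lean document; each statement's English description precedes it below -/
import Mathlib

section
/- If ‖·‖: K((t)) → ℝ is a seminorm that is bounded on every bounded subset of K((t)) (for the higher topology), then there exists an index i_0 ∈ ℤ such that ‖t^i‖ = 0 for all i ≥ i_0. -/
/-!
Common setting: `K` is a characteristic-zero local field (a finite extension of `ℚ_p`)
with ring of integers `𝒪 = {c : K | ‖c‖ ≤ 1}`, maximal ideal `𝔭 = {c : K | ‖c‖ < 1}`,
residue field of cardinality `q` and the absolute value normalised by `‖π‖ = q⁻¹`.
We formalise the two-dimensional local fields `K((t))` (as `LaurentSeries K`) and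
`K{{t}}` (as the submodule `mixedCarrier K` of `ℤ → K`), their higher topologies, and
the relevant functional-analytic notions (lattices, seminorms, boundedness,
c-compactness, compactoidness, completeness for nets, duality).
-/

open Filter Topology Set Pointwise
open scoped Classical

noncomputable section

namespace TwoDimLF

variable (K : Type) [NontriviallyNormedField K]

/-- `K` is a characteristic-zero nonarchimedean local field: the norm is nonarchimedean,
takes the values `q^ℤ` on `K˟` (with a uniformizer of norm `q⁻¹`), `K` is complete, locally
compact, of characteristic zero, and the residue field has exactly `q` elements. -/
structure IsCharZeroLocalField (q : ℕ) : Prop where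
  nonarch : ∀ x y : K, ‖x + y‖ ≤ max ‖x‖ ‖y‖
  one_lt_q : 1 < q
  norm_values : ∀ x : K, x ≠ 0 → ∃ n : ℤ, ‖x‖ = (q : ℝ) ^ (-n)
  exists_uniformizer : ∃ π : K, ‖π‖ = ((q : ℝ))⁻¹
  charZero : CharZero K
  locallyCompact : LocallyCompactSpace K
  complete : CompleteSpace K
  residue_card : ∃ s : Finset K, s.card = q ∧
    ∀ x : K, ‖x‖ ≤ 1 → ∃! y, y ∈ s ∧ ‖x - y‖ < 1

/-- The fractional ideal `𝔭^n ⊆ K` for `n ∈ ℤ ∪ {-∞}`, with the convention `𝔭^(-∞) = K`. -/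
def pB (q : ℕ) (n : WithBot ℤ) : Set K :=
  WithBot.recBotCoe Set.univ (fun m : ℤ => {x : K | ‖x‖ ≤ (q : ℝ) ^ (-m)}) n

/-- The fractional ideal `𝔭^n ⊆ K` for `n ∈ ℤ ∪ {∞}`, with the convention `𝔭^∞ = {0}`. -/
def pT (q : ℕ) (n : WithTop ℤ) : Set K :=
  WithTop.recTopCoe {0} (fun m : ℤ => {x : K | ‖x‖ ≤ (q : ℝ) ^ (-m)}) n

/-- The fractional ideal `𝔭^n ⊆ K` for `n ∈ ℤ ∪ {±∞}`. -/
def pE (q : ℕ) (n : WithBot (WithTop ℤ)) : Set K :=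
  WithBot.recBotCoe Set.univ (fun m : WithTop ℤ => pT K q m) n

/-- `q ^ n ∈ ℝ` for `n ∈ ℤ ∪ {-∞}`, with the convention `q^(-∞) = 0`. -/
def qpow (q : ℕ) (n : WithBot ℤ) : ℝ :=
  WithBot.recBotCoe 0 (fun m : ℤ => (q : ℝ) ^ m) n

/-- `1 - k` for `k ∈ ℤ ∪ {±∞}` (so `1 - (±∞) = ∓∞`). -/
def oneSubE : WithBot (WithTop ℤ) → WithBot (WithTop ℤ) :=
  WithBot.recBotCoe ((⊤ : WithTop ℤ) : WithBot (WithTop ℤ))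
    (WithTop.recTopCoe (⊥ : WithBot (WithTop ℤ))
      (fun z : ℤ => (((1 - z : ℤ) : WithTop ℤ) : WithBot (WithTop ℤ))))

section LCS

variable {V : Type} [AddCommGroup V] [Module K V]

/-- `S` is an `𝒪`-submodule of the `K`-vector space `V`, where `𝒪 = {c : K | ‖c‖ ≤ 1}`
is the ring of integers of `K`. -/
def IsOSubmodule (S : Set V) : Prop :=
  (0 : V) ∈ S ∧ (∀ x ∈ S, ∀ y ∈ S, x + y ∈ S) ∧
    ∀ c : K, ‖c‖ ≤ 1 → ∀ x ∈ S, c • x ∈ S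

/-- `S` is an `𝒪`-lattice in `V`: an `𝒪`-submodule such that every vector is carried
into `S` by some nonzero scalar. -/
def IsLatticeSet (S : Set V) : Prop :=
  IsOSubmodule K S ∧ ∀ v : V, ∃ a : K, a ≠ 0 ∧ a • v ∈ S

/-- A (nonarchimedean) seminorm on the `K`-vector space `V`. -/
def IsSeminorm (N : V → ℝ) : Prop :=
  (∀ (c : K) (v : V), N (c • v) = ‖c‖ * N v) ∧ ∀ v w : V, N (v + w) ≤ max (N v) (N w)

/-- The gauge seminorm of a lattice `Λ ⊆ V`: `‖v‖_Λ = inf {‖a‖ : v ∈ aΛ}`. -/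
def gaugeSeminorm (Λ : Set V) (v : V) : ℝ :=
  sInf {r : ℝ | ∃ a : K, v ∈ a • Λ ∧ r = ‖a‖}

/-- The group topology on `W` determined by a family `B` of neighbourhoods of zero:
neighbourhoods of `x` are generated by the translates `x + U`, `U ∈ B`. -/
def addTopologyOf {W : Type} [AddCommGroup W] (B : Set (Set W)) : TopologicalSpace W :=
  TopologicalSpace.mkOfNhds fun x => Filter.map (fun v => x + v) (⨅ U ∈ B, Filter.principal U)

/-- `B` is (Von-Neumann) bounded for the locally convex topology `τ`: every open lattice
absorbs it. -/
def IsVNBounded (τ : TopologicalSpace V) (B : Set V) : Prop :=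
  ∀ Λ : Set V, IsLatticeSet K Λ → IsOpen[τ] Λ → ∃ a : K, B ⊆ a • Λ

/-- The `𝒪`-submodule `A ⊆ V` is c-compact: for every decreasing filtered family of open
lattices `L i`, the canonical map `A → lim A/(L i ∩ A)` is surjective (phrased via
compatible families of representatives). -/
def IsCCompact (τ : TopologicalSpace V) (A : Set V) : Prop :=
  ∀ (ι : Type) (L : ι → Set V),
    (∀ i, IsLatticeSet K (L i) ∧ IsOpen[τ] (L i)) →
    (∀ i j, ∃ k, L k ⊆ L i ∧ L k ⊆ L j) →
    ∀ x : ι → V, (∀ i, x i ∈ A) →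
      (∀ i j, L j ⊆ L i → x j - x i ∈ L i) →
      ∃ a ∈ A, ∀ i, a - x i ∈ L i

/-- The `𝒪`-submodule `A ⊆ V` is compactoid: for every open lattice `Λ` there are finitely
many vectors `v₁, …, v_m ∈ V` with `A ⊆ Λ + 𝒪v₁ + ⋯ + 𝒪v_m`. -/
def IsCompactoid (τ : TopologicalSpace V) (A : Set V) : Prop :=
  ∀ Λ : Set V, IsLatticeSet K Λ → IsOpen[τ] Λ →
    ∃ (m : ℕ) (v : Fin m → V),
      A ⊆ {u : V | ∃ l ∈ Λ, ∃ c : Fin m → K, (∀ j, ‖c j‖ ≤ 1) ∧ u = l + ∑ j, c j • v j}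

/-- `A ⊆ V` is complete: every Cauchy net with values in `A` converges to a point of `A`
(for the topology `τ`). -/
def IsNetComplete (τ : TopologicalSpace V) (A : Set V) : Prop :=
  ∀ (ι : Type) [Preorder ι] [Nonempty ι],
    (∀ i j : ι, ∃ k, i ≤ k ∧ j ≤ k) →
    ∀ x : ι → V, (∀ i, x i ∈ A) →
      (∀ U ∈ @nhds V τ 0, ∃ i0, ∀ j ≥ i0, ∀ k ≥ i0, x j - x k ∈ U) →
      ∃ a ∈ A, Filter.Tendsto x Filter.atTop (@nhds V τ a)

/-- `τ` makes `V` a locally convex topological `K`-vector space: it is a vector-space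
topology whose filter of neighbourhoods of zero admits a basis of lattices. -/
def IsLCTVS (τ : TopologicalSpace V) : Prop :=
  @IsTopologicalAddGroup V τ _ ∧ @ContinuousSMul K V _ _ τ ∧
    ∀ S ∈ @nhds V τ 0, ∃ Λ : Set V, IsLatticeSet K Λ ∧ Λ ∈ @nhds V τ 0 ∧ Λ ⊆ S

/-- The topological dual of `(V, τ)`: continuous `K`-linear forms, as a set of functions. -/
def dualSet (τ : TopologicalSpace V) : Set (V → K) :=
  {l | IsLinearMap K l ∧ @Continuous V K τ _ l}

/-- Basic neighbourhoods of zero for the `c`-topology on `V → K`: uniform convergence on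
compactoid `𝒪`-submodules. -/
def cTopBasic (τ : TopologicalSpace V) : Set (Set (V → K)) :=
  {S | ∃ (B : Set V) (ε : ℝ), IsOSubmodule K B ∧ IsCompactoid K τ B ∧ 0 < ε ∧
    S = {l : V → K | ∀ x ∈ B, ‖l x‖ ≤ ε}}

/-- The `c`-topology (uniform convergence on compactoid `𝒪`-submodules) on `V → K`. -/
def cTop (τ : TopologicalSpace V) : TopologicalSpace (V → K) :=
  addTopologyOf (cTopBasic K τ)

/-- The pseudo-polar `A^p = {l ∈ V' : |l(v)| < 1 for all v ∈ A}`. -/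
def pseudoPolar (τ : TopologicalSpace V) (A : Set V) : Set (V → K) :=
  {l | l ∈ dualSet K τ ∧ ∀ v ∈ A, ‖l v‖ < 1}

/-- The pseudo-bipolar `A^{pp} = {v ∈ V : |l(v)| < 1 for all l ∈ A^p}`. -/
def pseudoBipolar (τ : TopologicalSpace V) (A : Set V) : Set V :=
  {v | ∀ l ∈ pseudoPolar K τ A, ‖l v‖ < 1}

end LCS

/-! ### The equal characteristic field `K((t))` -/

/-- Basic neighbourhoods of zero for the higher topology on `K((t))`:
`Σ U_i t^i` where each `U_i` is an open neighbourhood of `0` in `K` and `U_i = K` for all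
sufficiently large `i`. -/
def laurentBasic : Set (Set (LaurentSeries K)) :=
  {S | ∃ U : ℤ → Set K, (∀ i, IsOpen (U i) ∧ (0 : K) ∈ U i) ∧
    (∃ N : ℤ, ∀ i, N ≤ i → U i = Set.univ) ∧
    S = {f : LaurentSeries K | ∀ i, f.coeff i ∈ U i}}

/-- The higher topology on `K((t))`. -/
def laurentTop : TopologicalSpace (LaurentSeries K) := addTopologyOf (laurentBasic K)

/-- `Λ = Σ_{i∈ℤ} 𝔭^{n_i} t^i ⊆ K((t))` for a sequence `(n_i) ⊆ ℤ ∪ {-∞}`. -/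
def laurentLambda (q : ℕ) (n : ℤ → WithBot ℤ) : Set (LaurentSeries K) :=
  {f | ∀ i, f.coeff i ∈ pB K q (n i)}

/-- `B = Σ_{i∈ℤ} 𝔭^{k_i} t^i ⊆ K((t))` for a sequence `(k_i) ⊆ ℤ ∪ {∞}`. -/
def laurentPT (q : ℕ) (k : ℤ → WithTop ℤ) : Set (LaurentSeries K) :=
  {f | ∀ i, f.coeff i ∈ pT K q (k i)}

/-- `A = Σ_{i∈ℤ} 𝔭^{k_i} t^i ⊆ K((t))` for a sequence `(k_i) ⊆ ℤ ∪ {±∞}`. -/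
def laurentPE (q : ℕ) (k : ℤ → WithBot (WithTop ℤ)) : Set (LaurentSeries K) :=
  {f | ∀ i, f.coeff i ∈ pE K q (k i)}

/-- The admissible seminorm `‖Σ x_i t^i‖ = max_i ‖x_i‖ q^{n_i}` on `K((t))`. -/
def laurentSeminorm (q : ℕ) (n : ℤ → WithBot ℤ) (f : LaurentSeries K) : ℝ :=
  sSup {r : ℝ | ∃ i : ℤ, r = ‖f.coeff i‖ * qpow q (n i)}

/-- The ring of integers `K[[t]] ⊆ K((t))`. -/
def laurentIntegers : Set (LaurentSeries K) := {f | ∀ i, i < 0 → f.coeff i = 0}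

/-- The rank-two ring of integers `𝒪 + tK[[t]] ⊆ K((t))`. -/
def laurentRankTwo : Set (LaurentSeries K) :=
  {f | (∀ i, i < 0 → f.coeff i = 0) ∧ ‖f.coeff 0‖ ≤ 1}

/-- The pairing `γ(x)(y) = π₀(xy) = Σ_i x_i y_{-i}` on `K((t))`. -/
def laurentPairing (x y : LaurentSeries K) : K := ∑' i : ℤ, x.coeff i * y.coeff (-i)

/-! ### The mixed characteristic field `K{{t}}` -/

/-- The underlying `K`-vector space of `K{{t}}`: functions `x : ℤ → K` (coefficients of
`Σ x_i t^i`) with `inf_i v_K(x_i) > -∞` (i.e. bounded norms) and `x_i → 0` as `i → -∞`. -/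
def mixedCarrier : Submodule K (ℤ → K) where
  carrier := {x | (∃ C : ℝ, ∀ i, ‖x i‖ ≤ C) ∧ Filter.Tendsto x Filter.atBot (nhds (0 : K))}
  zero_mem' := ⟨⟨0, fun i => by simp⟩, tendsto_const_nhds⟩
  add_mem' := by
    rintro x y ⟨⟨C, hC⟩, hx⟩ ⟨⟨D, hD⟩, hy⟩
    refine ⟨⟨C + D, fun i => (norm_add_le _ _).trans (add_le_add (hC i) (hD i))⟩, ?_⟩
    have hxy := hx.add hy
    rw [add_zero] at hxy
    exact hxy
  smul_mem' := by
    rintro c x ⟨⟨C, hC⟩, hx⟩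
    refine ⟨⟨‖c‖ * C, fun i => ?_⟩, ?_⟩
    · have h : ‖(c • x) i‖ = ‖c‖ * ‖x i‖ := by simp [norm_smul]
      rw [h]
      exact mul_le_mul_of_nonneg_left (hC i) (norm_nonneg c)
    · have hcx := hx.const_smul c
      rw [smul_zero] at hcx
      exact hcx

/-- The field `K{{t}}`, as a `K`-vector space. -/
abbrev Mt := ↥(mixedCarrier K)

/-- Basic neighbourhoods of zero for the higher topology on `K{{t}}`:
`Σ V_i t^i` where each `V_i` is an open neighbourhood of `0` in `K`, some `𝔭^c` is
contained in every `V_i`, and for every `l` eventually `𝔭^l ⊆ V_i`. -/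
def mixedBasic (q : ℕ) : Set (Set (Mt K)) :=
  {S | ∃ Vs : ℤ → Set K, (∀ i, IsOpen (Vs i) ∧ (0 : K) ∈ Vs i) ∧
    (∃ c : ℤ, ∀ i, {x : K | ‖x‖ ≤ (q : ℝ) ^ (-c)} ⊆ Vs i) ∧
    (∀ l : ℤ, ∃ i0 : ℤ, ∀ i, i0 ≤ i → {x : K | ‖x‖ ≤ (q : ℝ) ^ (-l)} ⊆ Vs i) ∧
    S = {f : Mt K | ∀ i, f.1 i ∈ Vs i}}

/-- The higher topology on `K{{t}}`. -/
def mixedTop (q : ℕ) : TopologicalSpace (Mt K) := addTopologyOf (mixedBasic K q)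

/-- `Λ = Σ_{i∈ℤ} 𝔭^{n_i} t^i ⊆ K{{t}}` for a sequence `(n_i) ⊆ ℤ ∪ {-∞}`. -/
def mixedLambda (q : ℕ) (n : ℤ → WithBot ℤ) : Set (Mt K) :=
  {f | ∀ i, f.1 i ∈ pB K q (n i)}

/-- `B = Σ_{i∈ℤ} 𝔭^{k_i} t^i ⊆ K{{t}}` for a sequence `(k_i) ⊆ ℤ ∪ {∞}`. -/
def mixedPT (q : ℕ) (k : ℤ → WithTop ℤ) : Set (Mt K) :=
  {f | ∀ i, f.1 i ∈ pT K q (k i)}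

/-- `A = Σ_{i∈ℤ} 𝔭^{k_i} t^i ⊆ K{{t}}` for a sequence `(k_i) ⊆ ℤ ∪ {±∞}`. -/
def mixedPE (q : ℕ) (k : ℤ → WithBot (WithTop ℤ)) : Set (Mt K) :=
  {f | ∀ i, f.1 i ∈ pE K q (k i)}

/-- The admissible seminorm `‖Σ x_i t^i‖ = sup_i ‖x_i‖ q^{n_i}` on `K{{t}}`. -/
def mixedSeminorm (q : ℕ) (n : ℤ → WithBot ℤ) (f : Mt K) : ℝ :=
  sSup {r : ℝ | ∃ i : ℤ, r = ‖f.1 i‖ * qpow q (n i)}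

/-- The ring of integers `𝒪{{t}} ⊆ K{{t}}`. -/
def mixedIntegers : Set (Mt K) := {f | ∀ i, ‖f.1 i‖ ≤ 1}

/-- The rank-two ring of integers `Σ_{i<0} 𝔭 t^i + Σ_{i≥0} 𝒪 t^i ⊆ K{{t}}`. -/
def mixedRankTwo (q : ℕ) : Set (Mt K) :=
  {f | (∀ i : ℤ, i < 0 → ‖f.1 i‖ ≤ ((q : ℝ))⁻¹) ∧ ∀ i : ℤ, 0 ≤ i → ‖f.1 i‖ ≤ 1}

/-- The monomial `t^i ∈ K{{t}}`. -/
def mixedT (i : ℤ) : Mt K :=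
  ⟨fun j => if j = i then 1 else 0,
    ⟨⟨1, fun j => by by_cases h : j = i <;> simp [h]⟩, by
      refine (tendsto_const_nhds : Filter.Tendsto (fun _ : ℤ => (0 : K))
        Filter.atBot (nhds 0)).congr' ?_
      filter_upwards [Filter.eventually_le_atBot (i - 1)] with j hj
      have h : j ≠ i := by omega
      simp [h]⟩⟩

/-- Coefficients of the product of two elements of `K{{t}}` (Cauchy product). -/
def mixedMulCoeff (x y : Mt K) : ℤ → K := fun k => ∑' i : ℤ, x.1 i * y.1 (k - i)

/-- Multiplication on `K{{t}}`. -/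
def mixedMul (x y : Mt K) : Mt K :=
  if h : mixedMulCoeff K x y ∈ mixedCarrier K then ⟨_, h⟩ else 0

/-- The pairing `γ(x)(y) = π₀(xy) = Σ_i x_i y_{-i}` on `K{{t}}`. -/
def mixedPairing (x y : Mt K) : K := ∑' i : ℤ, x.1 i * y.1 (-i)


lemma seminorm_nonneg {N : LaurentSeries K → ℝ} (hN : IsSeminorm K N) (v : LaurentSeries K) :
    0 ≤ N v := by
  have h0 : N 0 = 0 := by
    have := hN.1 0 0
    simpa using this
  have hneg : N (-v) = N v := by
    have := hN.1 (-1) v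
    simpa using this
  have := hN.2 v (-v)
  rw [add_neg_cancel, h0, hneg, max_self] at this
  linarith

lemma laurentBasic_inter {S T : Set (LaurentSeries K)} (hS : S ∈ laurentBasic K)
    (hT : T ∈ laurentBasic K) : S ∩ T ∈ laurentBasic K := by
  obtain ⟨U, hU, ⟨M, hM⟩, rfl⟩ := hS
  obtain ⟨V, hV, ⟨M', hM'⟩, rfl⟩ := hT
  refine ⟨fun i => U i ∩ V i, fun i => ⟨(hU i).1.inter (hV i).1, (hU i).2, (hV i).2⟩,
    ⟨max M M', fun i hi => by
      show U i ∩ V i = Set.univ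
      rw [hM i (le_trans (le_max_left _ _) hi), hM' i (le_trans (le_max_right _ _) hi)]
      simp⟩, ?_⟩
  ext f
  simp [Set.mem_inter_iff, forall_and]

lemma laurentBasic_nonempty : (laurentBasic K).Nonempty :=
  ⟨_, ⟨fun _ => Set.univ, fun _ => ⟨isOpen_univ, Set.mem_univ _⟩, ⟨0, fun _ _ => rfl⟩, rfl⟩⟩

lemma exists_basic_subset {Λ : Set (LaurentSeries K)} (h0 : (0 : LaurentSeries K) ∈ Λ)
    (hopen : IsOpen[laurentTop K] Λ) : ∃ S ∈ laurentBasic K, S ⊆ Λ := by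
  have hmem : Λ ∈ Filter.map (fun v => (0 : LaurentSeries K) + v)
      (⨅ U ∈ laurentBasic K, Filter.principal U) := hopen 0 h0
  rw [Filter.mem_map] at hmem
  have hΛ : Λ ∈ ⨅ U ∈ laurentBasic K, Filter.principal U := by
    simpa [zero_add] using hmem
  have hdir : DirectedOn ((fun U => Filter.principal U) ⁻¹'o (· ≥ ·)) (laurentBasic K) := by
    intro S hS T hT
    refine ⟨S ∩ T, laurentBasic_inter K hS hT, ?_, ?_⟩
    · exact Filter.principal_mono.2 Set.inter_subset_left
    · exact Filter.principal_mono.2 Set.inter_subset_right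
  rw [Filter.mem_biInf_of_directed hdir (laurentBasic_nonempty K)] at hΛ
  obtain ⟨S, hS, hSΛ⟩ := hΛ
  exact ⟨S, hS, hSΛ⟩

/-- If `‖·‖ : K((t)) → ℝ` is a seminorm which is bounded on every bounded
subset of `K((t))` (for the higher topology), then there exists `i0 ∈ ℤ` such that
`‖t^i‖ = 0` for all `i ≥ i0`. -/
theorem statement8 (q : ℕ) (hK : IsCharZeroLocalField K q)
    (N : LaurentSeries K → ℝ) (hN : IsSeminorm K N)
    (hbdd : ∀ B : Set (LaurentSeries K), IsVNBounded K (laurentTop K) B →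
      ∃ C : ℝ, ∀ x ∈ B, N x ≤ C) :
    ∃ i0 : ℤ, ∀ i : ℤ, i0 ≤ i → N (HahnSeries.single i (1 : K)) = 0 := by
  by_contra hcon
  push_neg at hcon
  -- choose coefficients making `N` unbounded on the family `c n • t^n`
  set c : ℕ → K := fun n =>
    if h : N (HahnSeries.single (n : ℤ) (1 : K)) = 0 then 1
    else Classical.choose (NormedField.exists_lt_norm K
      ((n : ℝ) / N (HahnSeries.single (n : ℤ) (1 : K)))) with hc
  have key : ∀ m : ℕ, N (HahnSeries.single (m : ℤ) (1 : K)) ≠ 0 →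
      (m : ℝ) < ‖c m‖ * N (HahnSeries.single (m : ℤ) (1 : K)) := by
    intro m hm
    have hpos : 0 < N (HahnSeries.single (m : ℤ) (1 : K)) :=
      lt_of_le_of_ne (seminorm_nonneg K hN _) (Ne.symm hm)
    have hch := Classical.choose_spec (NormedField.exists_lt_norm K
      ((m : ℝ) / N (HahnSeries.single (m : ℤ) (1 : K))))
    have hcm : (m : ℝ) / N (HahnSeries.single (m : ℤ) (1 : K)) < ‖c m‖ := by
      rw [hc]; simp only; rw [dif_neg hm]; exact hch
    calc (m : ℝ) = ((m : ℝ) / N (HahnSeries.single (m : ℤ) (1 : K))) *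
          N (HahnSeries.single (m : ℤ) (1 : K)) := by field_simp
      _ < ‖c m‖ * N (HahnSeries.single (m : ℤ) (1 : K)) := by
          exact mul_lt_mul_of_pos_right hcm hpos
  set B : Set (LaurentSeries K) :=
    Set.range (fun n : ℕ => c n • HahnSeries.single (n : ℤ) (1 : K)) with hBdef
  have hB : IsVNBounded K (laurentTop K) B := by
    intro Λ hΛ hΛopen
    obtain ⟨S, hS, hSΛ⟩ := exists_basic_subset K hΛ.1.1 hΛopen
    obtain ⟨U, hU, ⟨M, hM⟩, rfl⟩ := hS
    choose aa haa hamem using hΛ.2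
    set R : ℝ := ∑ n ∈ Finset.range M.toNat,
      ‖(aa (c n • HahnSeries.single (n : ℤ) (1 : K)))⁻¹‖ with hR
    obtain ⟨a, ha⟩ := NormedField.exists_lt_norm K (max R 1)
    have ha1 : (1 : ℝ) < ‖a‖ := lt_of_le_of_lt (le_max_right _ _) ha
    have ha0 : a ≠ 0 := by
      intro h; rw [h, norm_zero] at ha1; linarith
    have hanorm : (0 : ℝ) < ‖a‖ := by linarith
    refine ⟨a, ?_⟩
    rintro x ⟨n, rfl⟩
    rw [Set.mem_smul_set_iff_inv_smul_mem₀ ha0]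
    by_cases hn : M ≤ (n : ℤ)
    · apply hSΛ
      intro i
      by_cases hin : i = (n : ℤ)
      · have : U i = Set.univ := hM i (hin ▸ hn)
        rw [this]; exact Set.mem_univ _
      · have : (a⁻¹ • (c n • HahnSeries.single (n : ℤ) (1 : K))).coeff i = 0 := by
          rw [HahnSeries.coeff_smul, HahnSeries.coeff_smul, HahnSeries.coeff_single,
            if_neg hin]
          simp
        rw [this]; exact (hU i).2
    · -- finitely many small indices: use absorption
      set v := c n • HahnSeries.single (n : ℤ) (1 : K) with hv
      have hnM : n ∈ Finset.range M.toNat := by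
        rw [Finset.mem_range]; omega
      have hRn : ‖(aa v)⁻¹‖ ≤ R := by
        rw [hR]
        exact Finset.single_le_sum (f := fun n => ‖(aa (c n •
          HahnSeries.single (n : ℤ) (1 : K)))⁻¹‖) (fun _ _ => norm_nonneg _) hnM
      have haav : aa v ≠ 0 := haa v
      have heq : a⁻¹ • v = (a⁻¹ * (aa v)⁻¹) • (aa v • v) := by
        conv_rhs => rw [← mul_smul]
        rw [mul_assoc, inv_mul_cancel₀ haav, mul_one]
      rw [heq]
      refine hΛ.1.2.2 _ ?_ _ (hamem v)
      rw [norm_mul, norm_inv, norm_inv]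
      have h1 : ‖(aa v)⁻¹‖ ≤ ‖a‖ := le_trans hRn (le_trans (le_max_left _ _) (le_of_lt ha))
      rw [norm_inv] at h1
      calc ‖a‖⁻¹ * ‖aa v‖⁻¹ ≤ ‖a‖⁻¹ * ‖a‖ :=
            mul_le_mul_of_nonneg_left h1 (by positivity)
        _ = 1 := inv_mul_cancel₀ (ne_of_gt hanorm)
  obtain ⟨C, hC⟩ := hbdd B hB
  obtain ⟨i, hi, hNi⟩ := hcon (max 0 (⌈C⌉ + 1))
  have hi0 : 0 ≤ i := le_trans (le_max_left _ _) hi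
  have hni : (i.toNat : ℤ) = i := Int.toNat_of_nonneg hi0
  have hx : c i.toNat • HahnSeries.single i (1 : K) ∈ B := ⟨i.toNat, by show c i.toNat • HahnSeries.single ((i.toNat : ℤ)) (1 : K) = _; rw [hni]⟩
  have h1 := hC _ hx
  have h2 : N (c i.toNat • HahnSeries.single i (1 : K)) =
      ‖c i.toNat‖ * N (HahnSeries.single i (1 : K)) := hN.1 _ _
  have h3 := key i.toNat (by rw [hni]; exact hNi)
  rw [hni] at h3
  have h4 : C < (i.toNat : ℝ) := by
    have hceil : (⌈C⌉ + 1 : ℤ) ≤ i := le_trans (le_max_right _ _) hi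
    have : C ≤ (⌈C⌉ : ℝ) := Int.le_ceil C
    have h5 : ((⌈C⌉ : ℝ) + 1) ≤ (i : ℝ) := by exact_mod_cast hceil
    have h6 : ((i.toNat : ℤ) : ℝ) = (i : ℝ) := by exact_mod_cast hni
    push_cast at h6 ⊢
    linarith
  rw [h2] at h1
  linarith

end TwoDimLF
end
end

section
/- For any sequence (k_i)_{i∈ℤ} ⊂ ℤ ∪ {∞} that is bounded below, the 𝒪-submodule B = Σ_{i∈ℤ} 𝔭^{k_i} t^i of K{{t}} is bounded for the higher topology; conversely, every bounded subset of K{{t}} is contained in a submodule of this form. Hence these submodules form a basis of the Von-Neumann bornology of K{{t}}. -/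
/-!
Common setting: `K` is a characteristic-zero local field (a finite extension of `ℚ_p`)
with ring of integers `𝒪 = {c : K | ‖c‖ ≤ 1}`, maximal ideal `𝔭 = {c : K | ‖c‖ < 1}`,
residue field of cardinality `q` and the absolute value normalised by `‖π‖ = q⁻¹`.
We formalise the two-dimensional local fields `K((t))` (as `LaurentSeries K`) and
`K{{t}}` (as the submodule `mixedCarrier K` of `ℤ → K`), their higher topologies, and
the relevant functional-analytic notions (lattices, seminorms, boundedness,
c-compactness, compactoidness, completeness for nets, duality).
-/

open Filter Topology Set Pointwise
open scoped Classical

noncomputable section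

namespace TwoDimLF

variable (K : Type) [NontriviallyNormedField K]

/-! ### Auxiliary lemmas for Statement 9 -/

section Aux

variable {q : ℕ}

lemma aux_one_lt_q (hK : IsCharZeroLocalField K q) : (1 : ℝ) < q := by
  exact_mod_cast hK.one_lt_q

lemma aux_q_pos (hK : IsCharZeroLocalField K q) : (0 : ℝ) < q := by
  linarith [aux_one_lt_q K hK]

lemma pB_coe (q : ℕ) (m : ℤ) :
    pB K q (m : WithBot ℤ) = {x : K | ‖x‖ ≤ (q : ℝ) ^ (-m)} := rfl

lemma pB_bot (q : ℕ) : pB K q (⊥ : WithBot ℤ) = Set.univ := rfl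

lemma aux_ball_isOpen (hK : IsCharZeroLocalField K q) (m : ℤ) :
    IsOpen {x : K | ‖x‖ ≤ (q : ℝ) ^ (-m)} := by
  have hq : (1 : ℝ) < q := aux_one_lt_q K hK
  have hset : {x : K | ‖x‖ ≤ (q : ℝ) ^ (-m)} = {x : K | ‖x‖ < (q : ℝ) ^ (-(m - 1))} := by
    ext x
    simp only [Set.mem_setOf_eq]
    constructor
    · intro h
      exact lt_of_le_of_lt h (zpow_lt_zpow_right₀ hq (by omega))
    · intro h
      rcases eq_or_ne x 0 with rfl | hx
      · simp only [norm_zero]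
        positivity
      · obtain ⟨n, hn⟩ := hK.norm_values x hx
        rw [hn] at h ⊢
        have hlt : -n < -(m - 1) := (zpow_lt_zpow_iff_right₀ hq).mp h
        exact zpow_le_zpow_right₀ hq.le (by omega)
  rw [hset]
  exact isOpen_lt continuous_norm continuous_const

lemma aux_pB_isOpen (hK : IsCharZeroLocalField K q) (n : WithBot ℤ) :
    IsOpen (pB K q n) := by
  induction n using WithBot.recBotCoe with
  | bot => exact isOpen_univ
  | coe m => exact aux_ball_isOpen K hK m

lemma aux_zero_mem_pB (hK : IsCharZeroLocalField K q) (n : WithBot ℤ) :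
    (0 : K) ∈ pB K q n := by
  induction n using WithBot.recBotCoe with
  | bot => trivial
  | coe m =>
      show ‖(0 : K)‖ ≤ (q : ℝ) ^ (-m)
      rw [norm_zero]
      positivity

lemma aux_add_mem_pB (hK : IsCharZeroLocalField K q) {n : WithBot ℤ} {x y : K}
    (hx : x ∈ pB K q n) (hy : y ∈ pB K q n) : x + y ∈ pB K q n := by
  induction n using WithBot.recBotCoe with
  | bot => trivial
  | coe m =>
      show ‖x + y‖ ≤ (q : ℝ) ^ (-m)
      exact le_trans (hK.nonarch x y) (max_le hx hy)

lemma aux_smul_mem_pB (hK : IsCharZeroLocalField K q) {n : WithBot ℤ} {c x : K}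
    (hc : ‖c‖ ≤ 1) (hx : x ∈ pB K q n) : c • x ∈ pB K q n := by
  induction n using WithBot.recBotCoe with
  | bot => trivial
  | coe m =>
      show ‖c • x‖ ≤ (q : ℝ) ^ (-m)
      rw [norm_smul]
      calc ‖c‖ * ‖x‖ ≤ 1 * ((q : ℝ) ^ (-m)) := by
            apply mul_le_mul hc hx (norm_nonneg x) zero_le_one
        _ = (q : ℝ) ^ (-m) := one_mul _

lemma aux_ball_subset_pB (hK : IsCharZeroLocalField K q) {n : WithBot ℤ} {c : ℤ}
    (h : n ≤ (c : WithBot ℤ)) :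
    {x : K | ‖x‖ ≤ (q : ℝ) ^ (-c)} ⊆ pB K q n := by
  induction n using WithBot.recBotCoe with
  | bot => exact fun x _ => trivial
  | coe m =>
      intro x hx
      have hm : m ≤ c := by exact_mod_cast h
      show ‖x‖ ≤ (q : ℝ) ^ (-m)
      exact le_trans hx (zpow_le_zpow_right₀ (aux_one_lt_q K hK).le (by omega))

lemma aux_lambda_mem_basic (hK : IsCharZeroLocalField K q) (n : ℤ → WithBot ℤ)
    (hn0 : ∀ i, n i ≤ ((0 : ℤ) : WithBot ℤ))
    (hnl : ∀ l : ℤ, ∃ i0 : ℤ, ∀ i, i0 ≤ i → n i ≤ (l : WithBot ℤ)) :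
    mixedLambda K q n ∈ mixedBasic K q := by
  refine ⟨fun i => pB K q (n i),
    fun i => ⟨aux_pB_isOpen K hK (n i), aux_zero_mem_pB K hK (n i)⟩,
    ⟨0, fun i => aux_ball_subset_pB K hK (hn0 i)⟩, fun l => ?_, rfl⟩
  obtain ⟨i0, h⟩ := hnl l
  exact ⟨i0, fun i hi => aux_ball_subset_pB K hK (h i hi)⟩

lemma aux_isOpen_of_mem_basic {q : ℕ} (S : Set (Mt K)) (hS : S ∈ mixedBasic K q)
    (hadd : ∀ x ∈ S, ∀ y ∈ S, x + y ∈ S) : IsOpen[mixedTop K q] S := by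
  show ∀ x ∈ S, S ∈ Filter.map (fun v => x + v) (⨅ U ∈ mixedBasic K q, Filter.principal U)
  intro x hx
  rw [Filter.mem_map]
  refine Filter.mem_of_superset
    (Filter.mem_iInf_of_mem S (Filter.mem_iInf_of_mem hS (Filter.mem_principal_self S))) ?_
  intro v hv
  exact hadd x hx v hv

end Aux

section Aux2

variable {q : ℕ}

lemma aux_uniformizer_ne_zero (hK : IsCharZeroLocalField K q) {π : K}
    (hπ : ‖π‖ = ((q : ℝ))⁻¹) : π ≠ 0 := by
  intro h
  rw [h, norm_zero] at hπ
  have := aux_q_pos K hK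
  have : (0 : ℝ) < (q : ℝ)⁻¹ := by positivity
  linarith [hπ]

lemma aux_lambda_openLattice (hK : IsCharZeroLocalField K q) (n : ℤ → WithBot ℤ)
    (hn0 : ∀ i, n i ≤ ((0 : ℤ) : WithBot ℤ))
    (hnl : ∀ l : ℤ, ∃ i0 : ℤ, ∀ i, i0 ≤ i → n i ≤ (l : WithBot ℤ)) :
    IsLatticeSet K (mixedLambda K q n) ∧ IsOpen[mixedTop K q] (mixedLambda K q n) := by
  have hadd : ∀ x ∈ mixedLambda K q n, ∀ y ∈ mixedLambda K q n,
      x + y ∈ mixedLambda K q n := by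
    intro x hx y hy i
    exact aux_add_mem_pB K hK (hx i) (hy i)
  constructor
  · refine ⟨⟨fun i => aux_zero_mem_pB K hK (n i), hadd, ?_⟩, ?_⟩
    · intro c hc x hx i
      exact aux_smul_mem_pB K hK hc (hx i)
    · intro v
      obtain ⟨⟨C, hC⟩, -⟩ := v.2
      obtain ⟨π, hπ⟩ := hK.exists_uniformizer
      have hπ0 : π ≠ 0 := aux_uniformizer_ne_zero K hK hπ
      obtain ⟨e, he⟩ := pow_unbounded_of_one_lt C (aux_one_lt_q K hK)
      refine ⟨π ^ e, pow_ne_zero e hπ0, fun i => ?_⟩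
      apply aux_ball_subset_pB K hK (hn0 i)
      show ‖(π ^ e • v).1 i‖ ≤ (q : ℝ) ^ (-(0 : ℤ))
      have hcoeff : (π ^ e • v).1 i = π ^ e * v.1 i := rfl
      rw [hcoeff, norm_mul, norm_pow, hπ, neg_zero, zpow_zero]
      have hqe : (0 : ℝ) < (q : ℝ) ^ e := pow_pos (aux_q_pos K hK) e
      have h1 : ((q : ℝ))⁻¹ ^ e = ((q : ℝ) ^ e)⁻¹ := by
        rw [inv_pow]
      rw [h1]
      rw [inv_mul_le_iff₀ hqe, mul_one]
      exact le_trans (hC i) he.le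
  · exact aux_isOpen_of_mem_basic K _ (aux_lambda_mem_basic K hK n hn0 hnl) hadd

lemma aux_basic_inter (hK : IsCharZeroLocalField K q) {U V : Set (Mt K)}
    (hU : U ∈ mixedBasic K q) (hV : V ∈ mixedBasic K q) :
    ∃ W ∈ mixedBasic K q, W ⊆ U ∧ W ⊆ V := by
  obtain ⟨Vs, hVs, ⟨c1, hc1⟩, hl1, rfl⟩ := hU
  obtain ⟨Ws, hWs, ⟨c2, hc2⟩, hl2, rfl⟩ := hV
  have hball : ∀ c c' : ℤ, c ≤ c' →
      {x : K | ‖x‖ ≤ (q : ℝ) ^ (-c')} ⊆ {x : K | ‖x‖ ≤ (q : ℝ) ^ (-c)} := by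
    intro c c' hcc x hx
    exact le_trans hx (zpow_le_zpow_right₀ (aux_one_lt_q K hK).le (by omega))
  refine ⟨{f : Mt K | ∀ i, f.1 i ∈ Vs i ∩ Ws i},
    ⟨fun i => Vs i ∩ Ws i,
      fun i => ⟨(hVs i).1.inter (hWs i).1, (hVs i).2, (hWs i).2⟩,
      ⟨max c1 c2, fun i => Set.subset_inter
        (le_trans (hball c1 (max c1 c2) (le_max_left _ _)) (hc1 i))
        (le_trans (hball c2 (max c1 c2) (le_max_right _ _)) (hc2 i))⟩,
      fun l => ?_, rfl⟩,
    fun f hf i => (hf i).1, fun f hf i => (hf i).2⟩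
  obtain ⟨i1, h1⟩ := hl1 l
  obtain ⟨i2, h2⟩ := hl2 l
  exact ⟨max i1 i2, fun i hi => Set.subset_inter
    (h1 i (le_trans (le_max_left _ _) hi)) (h2 i (le_trans (le_max_right _ _) hi))⟩

lemma aux_basic_nonempty (q : ℕ) : (mixedBasic K q).Nonempty := by
  refine ⟨{f : Mt K | ∀ i, f.1 i ∈ (Set.univ : Set K)},
    fun _ => Set.univ, fun i => ⟨isOpen_univ, trivial⟩,
    ⟨0, fun i => Set.subset_univ _⟩, fun l => ⟨0, fun i _ => Set.subset_univ _⟩, rfl⟩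

lemma aux_exists_basic_subset (hK : IsCharZeroLocalField K q) {Λ : Set (Mt K)}
    (ho : IsOpen[mixedTop K q] Λ) (h0 : (0 : Mt K) ∈ Λ) :
    ∃ U ∈ mixedBasic K q, U ⊆ Λ := by
  have ho' : ∀ a ∈ Λ, Λ ∈ Filter.map (fun v => a + v)
      (⨅ U ∈ mixedBasic K q, Filter.principal U) := ho
  have h := ho' 0 h0
  rw [Filter.mem_map] at h
  have hpre : (fun v => (0 : Mt K) + v) ⁻¹' Λ = Λ := by
    ext v; simp
  rw [hpre] at h
  have hdir : DirectedOn
      ((fun U : Set (Mt K) => Filter.principal U) ⁻¹'o (· ≥ ·)) (mixedBasic K q) := by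
    intro U hU V hV
    obtain ⟨W, hW, hWU, hWV⟩ := aux_basic_inter K hK hU hV
    exact ⟨W, hW, Filter.principal_mono.mpr hWU, Filter.principal_mono.mpr hWV⟩
  rw [Filter.mem_biInf_of_directed hdir (aux_basic_nonempty K q)] at h
  obtain ⟨U, hU, hU2⟩ := h
  exact ⟨U, hU, by simpa using hU2⟩

lemma aux_pT_norm_le (hK : IsCharZeroLocalField K q) {m : WithTop ℤ} {d : ℤ}
    (h : (d : WithTop ℤ) ≤ m) {x : K} (hx : x ∈ pT K q m) :
    ‖x‖ ≤ (q : ℝ) ^ (-d) := by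
  induction m using WithTop.recTopCoe with
  | top =>
      have hx0 : x = 0 := hx
      rw [hx0, norm_zero]
      positivity
  | coe m' =>
      have hdm : d ≤ m' := by exact_mod_cast h
      have hx' : ‖x‖ ≤ (q : ℝ) ^ (-m') := hx
      exact le_trans hx' (zpow_le_zpow_right₀ (aux_one_lt_q K hK).le (by omega))

end Aux2

/-- For any sequence `(k_i) ⊆ ℤ ∪ {∞}` which is bounded below, the
`𝒪`-submodule `B = Σ_{i∈ℤ} 𝔭^{k_i} t^i ⊆ K{{t}}` is bounded for the higher topology;
conversely every bounded subset of `K{{t}}` is contained in a submodule of this form. Hence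
these submodules form a basis of the Von-Neumann bornology of `K{{t}}`. -/
theorem statement9 (q : ℕ) (hK : IsCharZeroLocalField K q) :
    (∀ k : ℤ → WithTop ℤ, (∃ d : ℤ, ∀ i : ℤ, (d : WithTop ℤ) ≤ k i) →
      IsVNBounded K (mixedTop K q) (mixedPT K q k)) ∧
    (∀ B : Set (Mt K), IsVNBounded K (mixedTop K q) B →
      ∃ k : ℤ → WithTop ℤ, (∃ d : ℤ, ∀ i : ℤ, (d : WithTop ℤ) ≤ k i) ∧
        B ⊆ mixedPT K q k) := by
  have hq1 : (1 : ℝ) < q := aux_one_lt_q K hK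
  have hq0 : (0 : ℝ) < q := aux_q_pos K hK
  have hqne : (q : ℝ) ≠ 0 := ne_of_gt hq0
  constructor
  · -- Part 1: each `mixedPT K q k` with `k` bounded below is bounded.
    rintro k ⟨d, hd⟩ Λ hlat hopen
    obtain ⟨U, hU, hUsub⟩ := aux_exists_basic_subset K hK hopen hlat.1.1
    obtain ⟨Vs, hVs, ⟨c, hc⟩, -, rfl⟩ := hU
    obtain ⟨π, hπ⟩ := hK.exists_uniformizer
    have hπ0 : π ≠ 0 := aux_uniformizer_ne_zero K hK hπ
    refine ⟨π ^ (d - c), ?_⟩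
    intro f hf
    rw [Set.mem_smul_set_iff_inv_smul_mem₀ (zpow_ne_zero _ hπ0)]
    refine hUsub ?_
    intro i
    apply hc i
    show ‖((π ^ (d - c))⁻¹ • f).1 i‖ ≤ (q : ℝ) ^ (-c)
    have hco : ((π ^ (d - c))⁻¹ • f).1 i = (π ^ (d - c))⁻¹ * f.1 i := rfl
    rw [hco, norm_mul, norm_inv, norm_zpow, hπ]
    have hf' : ‖f.1 i‖ ≤ (q : ℝ) ^ (-d) := aux_pT_norm_le K hK (hd i) (hf i)
    have hnorm : (((q : ℝ))⁻¹ ^ (d - c))⁻¹ = (q : ℝ) ^ (d - c) := by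
      rw [inv_zpow, inv_inv]
    rw [hnorm]
    calc (q : ℝ) ^ (d - c) * ‖f.1 i‖ ≤ (q : ℝ) ^ (d - c) * (q : ℝ) ^ (-d) := by
          apply mul_le_mul_of_nonneg_left hf'
          positivity
      _ = (q : ℝ) ^ (-c) := by
          rw [← zpow_add₀ hqne]
          congr 1
          ring
  · -- Part 2: every bounded set is inside some `mixedPT K q k` with `k` bounded below.
    intro B hB
    by_cases hbound : ∃ d : ℤ, ∀ f ∈ B, ∀ i, ‖f.1 i‖ ≤ (q : ℝ) ^ (-d)
    · obtain ⟨d, hd⟩ := hbound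
      refine ⟨fun _ => (d : WithTop ℤ), ⟨d, fun i => le_refl _⟩, ?_⟩
      intro f hf i
      exact hd f hf i
    · exfalso
      push_neg at hbound
      -- Step 1: uniform bound on coefficients of index `≤ N`.
      have step1 : ∀ N : ℤ, ∃ C : ℝ, ∀ f ∈ B, ∀ i ≤ N, ‖f.1 i‖ ≤ C := by
        intro N
        have hn0 : ∀ i : ℤ, (if i ≤ N then ((0 : ℤ) : WithBot ℤ) else ⊥) ≤
            ((0 : ℤ) : WithBot ℤ) := by
          intro i; by_cases h : i ≤ N <;> simp [h]
        have hnl : ∀ l : ℤ, ∃ i0 : ℤ, ∀ i, i0 ≤ i →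
            (if i ≤ N then ((0 : ℤ) : WithBot ℤ) else ⊥) ≤ (l : WithBot ℤ) := by
          intro l
          exact ⟨N + 1, fun i hi => by simp [show ¬ i ≤ N by omega]⟩
        obtain ⟨hlat, hopen⟩ := aux_lambda_openLattice K hK _ hn0 hnl
        obtain ⟨a, ha⟩ := hB _ hlat hopen
        refine ⟨‖a‖, fun f hf i hi => ?_⟩
        obtain ⟨g, hg, rfl⟩ := Set.mem_smul_set.mp (ha hf)
        have hco : ((a • g) : Mt K).1 i = a * g.1 i := rfl
        rw [hco, norm_mul]
        have hgi : ‖g.1 i‖ ≤ 1 := by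
          have h := hg i
          simp only [if_pos hi] at h
          have h' : ‖g.1 i‖ ≤ (q : ℝ) ^ (-(0 : ℤ)) := h
          simpa using h'
        calc ‖a‖ * ‖g.1 i‖ ≤ ‖a‖ * 1 := mul_le_mul_of_nonneg_left hgi (norm_nonneg a)
          _ = ‖a‖ := mul_one _
      -- Key step: large coefficients must occur at arbitrarily large indices.
      have key : ∀ (N : ℤ) (r : ℝ), ∃ p : Mt K × ℤ, p.1 ∈ B ∧ N < p.2 ∧ r < ‖p.1.1 p.2‖ := by
        intro N r
        obtain ⟨C, hC⟩ := step1 N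
        obtain ⟨e, he⟩ := pow_unbounded_of_one_lt (max C r) hq1
        obtain ⟨f, hfB, i, hfi⟩ := hbound (-(e : ℤ))
        have hfi' : (q : ℝ) ^ (e : ℕ) < ‖f.1 i‖ := by
          have hz : (q : ℝ) ^ (-(-(e : ℤ))) = (q : ℝ) ^ (e : ℕ) := by
            rw [neg_neg, zpow_natCast]
          rwa [hz] at hfi
        have hgt : max C r < ‖f.1 i‖ := lt_trans he hfi'
        refine ⟨(f, i), hfB, ?_, lt_of_le_of_lt (le_max_right C r) hgt⟩
        by_contra hcon
        push_neg at hcon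
        exact absurd (hC f hfB i hcon)
          (not_le.mpr (lt_of_le_of_lt (le_max_left C r) hgt))
      choose P hP1 hP2 hP3 using key
      -- The sequence of witnesses with strictly increasing indices.
      obtain ⟨F, hmem, hstep, hbig⟩ :
          ∃ F : ℕ → Mt K × ℤ, (∀ m, (F m).1 ∈ B) ∧ (∀ m, (F m).2 < (F (m + 1)).2) ∧
            (∀ m, (q : ℝ) ^ (2 * (m + 1)) < ‖(F m).1.1 ((F m).2)‖) := by
        refine ⟨fun m => Nat.rec (P 0 ((q : ℝ) ^ (2 * (0 + 1))))
          (fun m ih => P ih.2 ((q : ℝ) ^ (2 * (m + 2)))) m, fun m => ?_, fun m => ?_, fun m => ?_⟩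
        · cases m with
          | zero => exact hP1 _ _
          | succ m => exact hP1 _ _
        · exact hP2 _ _
        · cases m with
          | zero => exact hP3 _ _
          | succ m => exact hP3 _ _
      set j : ℕ → ℤ := fun m => (F m).2 with hj
      have hjmono : StrictMono j := strictMono_nat_of_lt_succ hstep
      have hj0 : ∀ m : ℕ, j 0 + (m : ℤ) ≤ j m := by
        intro m
        induction m with
        | zero => simp
        | succ m ih =>
            have h1 : j m < j (m + 1) := hjmono (Nat.lt_succ_self m)
            push_cast
            push_cast at ih
            omega
      set cnt : ℤ → ℕ := fun i =>
        ((Finset.range ((i - j 0).toNat + 1)).filter (fun m => j m ≤ i)).card with hcnt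
      have hcnt_ge : ∀ (m : ℕ) (i : ℤ), j m ≤ i → m + 1 ≤ cnt i := by
        intro m i hmi
        have hsub : Finset.range (m + 1) ⊆
            (Finset.range ((i - j 0).toNat + 1)).filter (fun m => j m ≤ i) := by
          intro l hl
          rw [Finset.mem_range] at hl
          have hlm : l ≤ m := by omega
          have hjl : j l ≤ i := le_trans (hjmono.le_iff_le.mpr hlm) hmi
          have h0l : j 0 + (l : ℤ) ≤ i := le_trans (hj0 l) hjl
          refine Finset.mem_filter.mpr ⟨Finset.mem_range.mpr ?_, hjl⟩
          omega
        calc m + 1 = (Finset.range (m + 1)).card := (Finset.card_range _).symm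
          _ ≤ _ := Finset.card_le_card hsub
      have hcnt_le : ∀ m : ℕ, cnt (j m) ≤ m + 1 := by
        intro m
        have hsub : (Finset.range ((j m - j 0).toNat + 1)).filter (fun l => j l ≤ j m)
            ⊆ Finset.range (m + 1) := by
          intro l hl
          rw [Finset.mem_filter] at hl
          rw [Finset.mem_range]
          have := hjmono.le_iff_le.mp hl.2
          omega
        calc cnt (j m) ≤ (Finset.range (m + 1)).card := Finset.card_le_card hsub
          _ = m + 1 := Finset.card_range _
      -- The contradiction lattice.
      have hn0 : ∀ i : ℤ, ((-(cnt i : ℤ) : ℤ) : WithBot ℤ) ≤ ((0 : ℤ) : WithBot ℤ) := by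
        intro i
        exact_mod_cast (by omega : -(cnt i : ℤ) ≤ 0)
      have hnl : ∀ l : ℤ, ∃ i0 : ℤ, ∀ i, i0 ≤ i →
          ((-(cnt i : ℤ) : ℤ) : WithBot ℤ) ≤ (l : WithBot ℤ) := by
        intro l
        refine ⟨j ((-l).toNat), fun i hi => ?_⟩
        have h := hcnt_ge ((-l).toNat) i hi
        exact_mod_cast (by omega : -(cnt i : ℤ) ≤ l)
      obtain ⟨hlat, hopen⟩ := aux_lambda_openLattice K hK
        (fun i => ((-(cnt i : ℤ) : ℤ) : WithBot ℤ)) hn0 hnl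
      obtain ⟨a, ha⟩ := hB _ hlat hopen
      obtain ⟨e, he⟩ := pow_unbounded_of_one_lt ‖a‖ hq1
      obtain ⟨g, hg, hag⟩ := Set.mem_smul_set.mp (ha (hmem e))
      have hgj : ‖g.1 (j e)‖ ≤ (q : ℝ) ^ (cnt (j e)) := by
        have h' : ‖g.1 (j e)‖ ≤ (q : ℝ) ^ (-(-(cnt (j e) : ℤ))) := hg (j e)
        rwa [neg_neg, zpow_natCast] at h'
      have hb := hbig e
      rw [← hag] at hb
      have hco : ((a • g) : Mt K).1 (j e) = a * g.1 (j e) := rfl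
      rw [hco, norm_mul] at hb
      have hup : ‖a‖ * ‖g.1 (j e)‖ ≤ ‖a‖ * (q : ℝ) ^ (e + 1) := by
        apply mul_le_mul_of_nonneg_left _ (norm_nonneg a)
        exact le_trans hgj (pow_le_pow_right₀ hq1.le (hcnt_le e))
      have h2 : (q : ℝ) ^ (2 * (e + 1)) < ‖a‖ * (q : ℝ) ^ (e + 1) := lt_of_lt_of_le hb hup
      have hq2 : (q : ℝ) ^ (2 * (e + 1)) = (q : ℝ) ^ (e + 1) * (q : ℝ) ^ (e + 1) := by
        rw [two_mul, pow_add]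
      rw [hq2] at h2
      have hqe1 : (0 : ℝ) < (q : ℝ) ^ (e + 1) := pow_pos hq0 _
      have h3 : (q : ℝ) ^ (e + 1) < ‖a‖ := lt_of_mul_lt_mul_right h2 hqe1.le
      have h4 : ‖a‖ < (q : ℝ) ^ (e + 1) :=
        lt_of_lt_of_le he (pow_le_pow_right₀ hq1.le (Nat.le_succ e))
      linarith

end TwoDimLF
end
end

section
/- In K((t)) with the higher topology, the ring of integers K[[t]] and the rank-two ring of integers 𝒪 + tK[[t]] are c-compact 𝒪-submodules, but neither of them is compactoid. -/
/-!
Common setting: `K` is a characteristic-zero local field (a finite extension of `ℚ_p`)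
with ring of integers `𝒪 = {c : K | ‖c‖ ≤ 1}`, maximal ideal `𝔭 = {c : K | ‖c‖ < 1}`,
residue field of cardinality `q` and the absolute value normalised by `‖π‖ = q⁻¹`.
We formalise the two-dimensional local fields `K((t))` (as `LaurentSeries K`) and
`K{{t}}` (as the submodule `mixedCarrier K` of `ℤ → K`), their higher topologies, and
the relevant functional-analytic notions (lattices, seminorms, boundedness,
c-compactness, compactoidness, completeness for nets, duality).
-/

open Filter Topology Set Pointwise
open scoped Classical

noncomputable section

namespace TwoDimLF

variable (K : Type) [NontriviallyNormedField K]

/-! ### Auxiliary machinery for the proof of Statement 13 -/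

section Statement13Aux

variable {K}

lemma univ_mem_laurentBasic : (Set.univ : Set (LaurentSeries K)) ∈ laurentBasic K :=
  ⟨fun _ => Set.univ, fun _ => ⟨isOpen_univ, Set.mem_univ 0⟩, ⟨0, fun _ _ => rfl⟩,
    by ext f; simp⟩

lemma inter_mem_laurentBasic {W1 W2 : Set (LaurentSeries K)} (h1 : W1 ∈ laurentBasic K)
    (h2 : W2 ∈ laurentBasic K) : W1 ∩ W2 ∈ laurentBasic K := by
  obtain ⟨U1, hU1, ⟨N1, hN1⟩, rfl⟩ := h1
  obtain ⟨U2, hU2, ⟨N2, hN2⟩, rfl⟩ := h2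
  refine ⟨fun i => U1 i ∩ U2 i, fun i => ⟨(hU1 i).1.inter (hU2 i).1, ⟨(hU1 i).2, (hU2 i).2⟩⟩,
    ⟨max N1 N2, fun i hi => by
      show U1 i ∩ U2 i = Set.univ
      rw [hN1 i (le_trans (le_max_left _ _) hi), hN2 i (le_trans (le_max_right _ _) hi)]
      simp⟩, ?_⟩
  ext f
  simp only [Set.mem_inter_iff, Set.mem_setOf_eq, forall_and]

lemma laurent_iInf_mem {S : Set (LaurentSeries K)} :
    S ∈ ⨅ U ∈ laurentBasic K, Filter.principal U ↔ ∃ W ∈ laurentBasic K, W ⊆ S := by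
  haveI hne : Nonempty (laurentBasic K) := ⟨⟨Set.univ, univ_mem_laurentBasic⟩⟩
  have hdir : Directed (· ≥ ·)
      fun U : laurentBasic K => Filter.principal (U : Set (LaurentSeries K)) := by
    rintro ⟨W1, h1⟩ ⟨W2, h2⟩
    exact ⟨⟨W1 ∩ W2, inter_mem_laurentBasic h1 h2⟩,
      Filter.principal_mono.2 Set.inter_subset_left,
      Filter.principal_mono.2 Set.inter_subset_right⟩
  rw [iInf_subtype', Filter.mem_iInf_of_directed hdir]
  constructor
  · rintro ⟨⟨W, hW⟩, h⟩; exact ⟨W, hW, Filter.mem_principal.mp h⟩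
  · rintro ⟨W, hW, h⟩; exact ⟨⟨W, hW⟩, Filter.mem_principal.mpr h⟩

lemma isOpen_laurentTop_iff {S : Set (LaurentSeries K)} :
    IsOpen[laurentTop K] S ↔ ∀ a ∈ S, ∃ W ∈ laurentBasic K, ∀ w ∈ W, a + w ∈ S := by
  show (∀ a ∈ S, S ∈ Filter.map (fun v => a + v)
    (⨅ U ∈ laurentBasic K, Filter.principal U)) ↔ _
  refine forall_congr' fun a => forall_congr' fun _ => ?_
  rw [Filter.mem_map, laurent_iInf_mem]
  constructor
  · rintro ⟨W, hW, h⟩; exact ⟨W, hW, fun w hw => h hw⟩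
  · rintro ⟨W, hW, h⟩; exact ⟨W, hW, fun w hw => h w hw⟩

lemma exists_zeroCyl_subset {L : Set (LaurentSeries K)} (hL : IsOpen[laurentTop K] L)
    (h0 : (0 : LaurentSeries K) ∈ L) :
    ∃ N : ℤ, ∀ f : LaurentSeries K, (∀ m : ℤ, m < N → f.coeff m = 0) → f ∈ L := by
  rw [isOpen_laurentTop_iff] at hL
  obtain ⟨W, ⟨U, hU, ⟨N, hN⟩, rfl⟩, hWL⟩ := hL 0 h0
  refine ⟨N, fun f hf => ?_⟩
  have : (0 : LaurentSeries K) + f ∈ L := by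
    refine hWL f fun i => ?_
    rcases lt_or_ge i N with h | h
    · rw [hf i h]; exact (hU i).2
    · rw [hN i h]; exact Set.mem_univ _
  simpa using this

lemma nonarch_sub {q : ℕ} (hK : IsCharZeroLocalField K q) (x y : K) :
    ‖x - y‖ ≤ max ‖x‖ ‖y‖ := by
  simpa [sub_eq_add_neg] using hK.nonarch x (-y)

lemma classify_submodule {q : ℕ} (hK : IsCharZeroLocalField K q) (P : Set K)
    (h0 : (0:K) ∈ P) (hsmul : ∀ c : K, ‖c‖ ≤ 1 → ∀ p ∈ P, c * p ∈ P) :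
    P = Set.univ ∨ ∃ x₀ ∈ P, P = {x : K | ‖x‖ ≤ ‖x₀‖} := by
  have hq1 : (1:ℝ) < (q:ℝ) := by exact_mod_cast hK.one_lt_q
  have hmem : ∀ p ∈ P, ∀ y : K, ‖y‖ ≤ ‖p‖ → y ∈ P := by
    intro p hp y hy
    rcases eq_or_ne p 0 with rfl | hp0
    · have hy0 : y = 0 := norm_le_zero_iff.mp (by simpa using hy)
      rw [hy0]; exact h0
    · have hyp : y = (y * p⁻¹) * p := by field_simp
      have hc : ‖y * p⁻¹‖ ≤ 1 := by
        rw [norm_mul, norm_inv, ← div_eq_mul_inv]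
        exact div_le_one_of_le₀ hy (norm_nonneg p)
      rw [hyp]; exact hsmul _ hc p hp
  by_cases hb : ∃ C : ℝ, ∀ p ∈ P, ‖p‖ ≤ C
  · right
    obtain ⟨C, hC⟩ := hb
    by_cases hP0 : ∀ p ∈ P, p = (0:K)
    · refine ⟨0, h0, ?_⟩
      ext x
      simp only [Set.mem_setOf_eq, norm_zero]
      constructor
      · intro hx; rw [hP0 x hx]; simp
      · intro hx
        have : x = 0 := norm_le_zero_iff.mp hx
        rw [this]; exact h0
    · push_neg at hP0
      obtain ⟨p₁, hp₁P, hp₁⟩ := hP0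
      obtain ⟨n₁, hn₁⟩ := pow_unbounded_of_one_lt C hq1
      have hbdd : ∀ z : ℤ, (∃ p ∈ P, p ≠ 0 ∧ ‖p‖ = (q:ℝ) ^ (-z)) → -(n₁:ℤ) ≤ z := by
        rintro z ⟨p, hpP, hp0, hpn⟩
        by_contra hz
        push_neg at hz
        have h1 : (q:ℝ)^(n₁:ℤ) < (q:ℝ)^(-z) := (zpow_lt_zpow_iff_right₀ hq1).mpr (by omega)
        have h2 := hC p hpP
        rw [hpn] at h2
        have hCn : C < (q:ℝ)^(n₁:ℤ) := by rw [zpow_natCast]; exact hn₁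
        linarith
      obtain ⟨n₀, ⟨p₀, hp₀P, hp₀0, hp₀n⟩, hleast⟩ :=
        Int.exists_least_of_bdd ⟨-(n₁:ℤ), hbdd⟩
          (by obtain ⟨z, hz⟩ := hK.norm_values p₁ hp₁; exact ⟨z, p₁, hp₁P, hp₁, hz⟩)
      refine ⟨p₀, hp₀P, ?_⟩
      ext x
      simp only [Set.mem_setOf_eq]
      constructor
      · intro hx
        rcases eq_or_ne x 0 with rfl | hx0
        · simp
        · obtain ⟨z, hz⟩ := hK.norm_values x hx0
          have hn : n₀ ≤ z := hleast z ⟨x, hx, hx0, hz⟩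
          rw [hz, hp₀n]
          exact zpow_le_zpow_right₀ hq1.le (by omega)
      · intro hx; exact hmem p₀ hp₀P x hx
  · left
    push_neg at hb
    ext x
    simp only [Set.mem_univ, iff_true]
    obtain ⟨p, hpP, hp⟩ := hb ‖x‖
    exact hmem p hpP x hp.le

lemma core_directed {q : ℕ} (hK : IsCharZeroLocalField K q) {ι : Type} [Nonempty ι]
    (D : ι → Set K) (hne : ∀ i, (D i).Nonempty)
    (hshape : ∀ i, D i = Set.univ ∨ ∃ d x₀ : K, D i = {c : K | ‖c - d‖ ≤ ‖x₀‖})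
    (hdir : ∀ i j, ∃ k, D k ⊆ D i ∧ D k ⊆ D j) :
    ∃ c : K, ∀ i, c ∈ D i := by
  haveI : CompleteSpace K := hK.complete
  have hq1 : (1:ℝ) < (q:ℝ) := by exact_mod_cast hK.one_lt_q
  have hq0 : (0:ℝ) < (q:ℝ)⁻¹ := by positivity
  have hqlt : ((q:ℝ))⁻¹ < 1 := inv_lt_one_of_one_lt₀ hq1
  have hshape' : ∀ i, ∃ d x₀ : K, D i = Set.univ ∨ D i = {c : K | ‖c - d‖ ≤ ‖x₀‖} := by
    intro i
    rcases hshape i with h | ⟨d, x₀, h⟩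
    · exact ⟨0, 0, Or.inl h⟩
    · exact ⟨d, x₀, Or.inr h⟩
  choose ctr rad hDi using hshape'
  set J : Set ι := {i | ¬ D i = Set.univ} with hJ
  have hball : ∀ i ∈ J, D i = {c : K | ‖c - ctr i‖ ≤ ‖rad i‖} := fun i hi =>
    (hDi i).resolve_left hi
  have hctr : ∀ i ∈ J, ctr i ∈ D i := by
    intro i hi; rw [hball i hi]; simp
  have hclosed : ∀ i, IsClosed (D i) := by
    intro i
    rcases hDi i with h | h
    · rw [h]; exact isClosed_univ
    · rw [h]
      have : {c : K | ‖c - ctr i‖ ≤ ‖rad i‖} = Metric.closedBall (ctr i) ‖rad i‖ := by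
        ext c; simp [Metric.mem_closedBall, dist_eq_norm]
      rw [this]; exact Metric.isClosed_closedBall
  have hmono : ∀ i ∈ J, ∀ j ∈ J, D i ⊆ D j → ‖rad i‖ ≤ ‖rad j‖ := by
    intro i hi j hj hsub
    have h1 : ctr i + rad i ∈ D i := by rw [hball i hi]; simp
    have h2 : ‖ctr i + rad i - ctr j‖ ≤ ‖rad j‖ := by
      have := hsub h1; rw [hball j hj] at this; exact this
    have h3 : ‖ctr i - ctr j‖ ≤ ‖rad j‖ := by
      have := hsub (hctr i hi); rw [hball j hj] at this; exact this
    have h4 : rad i = (ctr i + rad i - ctr j) - (ctr i - ctr j) := by ring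
    calc ‖rad i‖ = ‖(ctr i + rad i - ctr j) - (ctr i - ctr j)‖ := by rw [← h4]
    _ ≤ max ‖ctr i + rad i - ctr j‖ ‖ctr i - ctr j‖ := nonarch_sub hK _ _
    _ ≤ ‖rad j‖ := max_le h2 h3
  have hJsub : ∀ k i, i ∈ J → D k ⊆ D i → k ∈ J := by
    intro k i hi hsub
    by_contra hk
    have hku : D k = Set.univ := not_not.mp hk
    obtain ⟨z, hz⟩ := NormedField.exists_lt_norm K ‖rad i‖
    have : ctr i + z ∈ D i := hsub (by rw [hku]; trivial)
    rw [hball i hi] at this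
    simp only [Set.mem_setOf_eq, add_sub_cancel_left] at this
    linarith
  have hsame : ∀ i ∈ J, ∀ k ∈ J, D k ⊆ D i → ‖rad i‖ ≤ ‖rad k‖ → D i ⊆ D k := by
    intro i hi k hk hsub hr
    intro c hc
    rw [hball i hi] at hc
    have h1 : ‖ctr k - ctr i‖ ≤ ‖rad i‖ := by
      have := hsub (hctr k hk); rw [hball i hi] at this; exact this
    rw [hball k hk]
    have h2 : c - ctr k = (c - ctr i) + (ctr i - ctr k) := by ring
    show ‖c - ctr k‖ ≤ ‖rad k‖
    calc ‖c - ctr k‖ = ‖(c - ctr i) + (ctr i - ctr k)‖ := by rw [← h2]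
    _ ≤ max ‖c - ctr i‖ ‖ctr i - ctr k‖ := hK.nonarch _ _
    _ ≤ ‖rad k‖ := by
        refine max_le (le_trans hc hr) ?_
        rw [norm_sub_rev]; exact le_trans h1 hr
  have hdecay : ∀ x y : K, ‖x‖ < ‖y‖ → ‖x‖ ≤ (q:ℝ)⁻¹ * ‖y‖ := by
    intro x y hxy
    rcases eq_or_ne x 0 with rfl | hx0
    · simp only [norm_zero]; positivity
    · have hy0 : y ≠ 0 := by
        intro h; rw [h, norm_zero] at hxy; exact absurd hxy (not_lt.mpr (norm_nonneg x))
      obtain ⟨n, hn⟩ := hK.norm_values x hx0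
      obtain ⟨m, hm⟩ := hK.norm_values y hy0
      rw [hn, hm] at hxy ⊢
      have hlt : -n < -m := (zpow_lt_zpow_iff_right₀ hq1).mp hxy
      have h1 : (q:ℝ)^(-n) ≤ (q:ℝ)^(-m-1) := zpow_le_zpow_right₀ hq1.le (by omega)
      have h2 : (q:ℝ)^(-m-1) = (q:ℝ)⁻¹ * (q:ℝ)^(-m) := by
        rw [zpow_sub₀ (by positivity : (q:ℝ) ≠ 0), zpow_one]
        ring
      rw [← h2]; exact h1
  by_cases hJne : ∃ i, i ∈ J
  · obtain ⟨i₀, hi₀⟩ := hJne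
    by_cases hminex : ∃ i ∈ J, ∀ j ∈ J, ‖rad i‖ ≤ ‖rad j‖
    · obtain ⟨i', hi', hmin⟩ := hminex
      refine ⟨ctr i', fun j => ?_⟩
      obtain ⟨k, hk1, hk2⟩ := hdir i' j
      have hkJ : k ∈ J := hJsub k i' hi' hk1
      have : D i' ⊆ D k := hsame i' hi' k hkJ hk1 (hmin k hkJ)
      exact hk2 (this (hctr i' hi'))
    · push_neg at hminex
      have hstep : ∀ p : {i : ι // i ∈ J}, ∃ p' : {i : ι // i ∈ J},
          D p'.1 ⊆ D p.1 ∧ ‖rad p'.1‖ ≤ (q:ℝ)⁻¹ * ‖rad p.1‖ := by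
        rintro ⟨i, hi⟩
        obtain ⟨j, hj, hlt⟩ := hminex i hi
        obtain ⟨k, hk1, hk2⟩ := hdir i j
        have hkJ : k ∈ J := hJsub k i hi hk1
        have hk3 : ‖rad k‖ ≤ ‖rad j‖ := hmono k hkJ j hj hk2
        exact ⟨⟨k, hkJ⟩, hk1, hdecay _ _ (lt_of_le_of_lt hk3 hlt)⟩
      choose F hF1 hF2 using hstep
      set k : ℕ → {i : ι // i ∈ J} := fun n => F^[n] ⟨i₀, hi₀⟩ with hkdef
      have hksucc : ∀ n, k (n+1) = F (k n) := fun n => Function.iterate_succ_apply' F n _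
      have hchain : ∀ n, D (k (n+1)).1 ⊆ D (k n).1 := by
        intro n; rw [hksucc n]; exact hF1 (k n)
      have hchain' : ∀ n m, n ≤ m → D (k m).1 ⊆ D (k n).1 := by
        intro n m hnm
        induction m with
        | zero => have h0 : n = 0 := Nat.le_zero.mp hnm; rw [h0]
        | succ m ih =>
          rcases Nat.eq_or_lt_of_le hnm with h | h
          · rw [← h]
          · exact subset_trans (hchain m) (ih (Nat.lt_succ_iff.mp h))
      have hrad : ∀ n, ‖rad (k n).1‖ ≤ ((q:ℝ)⁻¹)^n * ‖rad (k 0).1‖ := by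
        intro n
        induction n with
        | zero => simp
        | succ n ih =>
          rw [hksucc n]
          calc ‖rad (F (k n)).1‖ ≤ (q:ℝ)⁻¹ * ‖rad (k n).1‖ := hF2 (k n)
          _ ≤ (q:ℝ)⁻¹ * (((q:ℝ)⁻¹)^n * ‖rad (k 0).1‖) :=
              mul_le_mul_of_nonneg_left ih (le_of_lt hq0)
          _ = ((q:ℝ)⁻¹)^(n+1) * ‖rad (k 0).1‖ := by ring
      set pt : ℕ → K := fun n => ctr (k n).1 with hptdef
      have hptmem : ∀ n, pt n ∈ D (k n).1 := fun n => hctr _ (k n).2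
      have hband : ∀ n, ∀ a ∈ D (k n).1, ∀ b ∈ D (k n).1,
          ‖a - b‖ ≤ ((q:ℝ)⁻¹)^n * ‖rad (k 0).1‖ := by
        intro n a ha b hb
        rw [hball _ (k n).2] at ha hb
        have h : a - b = (a - ctr (k n).1) - (b - ctr (k n).1) := by ring
        calc ‖a - b‖ = ‖(a - ctr (k n).1) - (b - ctr (k n).1)‖ := by rw [← h]
        _ ≤ max ‖a - ctr (k n).1‖ ‖b - ctr (k n).1‖ := nonarch_sub hK _ _
        _ ≤ ‖rad (k n).1‖ := max_le ha hb
        _ ≤ ((q:ℝ)⁻¹)^n * ‖rad (k 0).1‖ := hrad n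
      have hcauchy : CauchySeq pt := by
        refine cauchySeq_of_le_geometric ((q:ℝ)⁻¹) ‖rad (k 0).1‖ hqlt fun n => ?_
        rw [dist_eq_norm, mul_comm]
        exact hband n (pt n) (hptmem n) (pt (n+1)) (hchain n (hptmem (n+1)))
      obtain ⟨c, hc⟩ := cauchySeq_tendsto_of_complete hcauchy
      have hgeo : Filter.Tendsto (fun n : ℕ => ((q:ℝ)⁻¹)^n * ‖rad (k 0).1‖)
          Filter.atTop (nhds 0) := by
        have := (tendsto_pow_atTop_nhds_zero_of_lt_one (le_of_lt hq0) hqlt).mul_const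
          ‖rad (k 0).1‖
        simpa using this
      have hcmem : ∀ n, c ∈ D (k n).1 := by
        intro n
        refine (hclosed (k n).1).mem_of_tendsto hc ?_
        filter_upwards [Filter.eventually_ge_atTop n] with m hm
        exact hchain' n m hm (hptmem m)
      refine ⟨c, fun j => ?_⟩
      by_cases hj : D j = Set.univ
      · rw [hj]; trivial
      · have hl : ∀ n, ∃ l, D l ⊆ D j ∧ D l ⊆ D (k n).1 := fun n => hdir j (k n).1
        choose l hl1 hl2 using hl
        have hee : ∀ n, ∃ y, y ∈ D (l n) := fun n => hne (l n)
        choose e he using hee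
        have heD : ∀ n, e n ∈ D j := fun n => hl1 n (he n)
        have hlim : Filter.Tendsto e Filter.atTop (nhds c) := by
          rw [tendsto_iff_dist_tendsto_zero]
          refine squeeze_zero (fun n => dist_nonneg) (fun n => ?_) hgeo
          rw [dist_eq_norm]
          exact hband n (e n) (hl2 n (he n)) c (hcmem n)
        exact (hclosed j).mem_of_tendsto hlim (Filter.Eventually.of_forall heD)
  · push_neg at hJne
    refine ⟨0, fun i => ?_⟩
    have : D i = Set.univ := not_not.mp (hJne i)
    rw [this]; trivial

lemma ccompact_of {q : ℕ} (hK : IsCharZeroLocalField K q) (A : Set (LaurentSeries K))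
    (hz : (0 : LaurentSeries K) ∈ A)
    (hadd : ∀ f ∈ A, ∀ g ∈ A, f + g ∈ A)
    (hsub : ∀ f ∈ A, ∀ g ∈ A, f - g ∈ A)
    (hsmul : ∀ c : K, ‖c‖ ≤ 1 → ∀ f ∈ A, c • f ∈ A)
    (hneg0 : ∀ f ∈ A, ∀ m : ℤ, m < 0 → f.coeff m = 0)
    (happrox : ∀ g : LaurentSeries K, (∀ m : ℤ, m < 0 → g.coeff m = 0) →
      (∀ n : ℕ, ∃ f ∈ A, ∀ m : ℕ, m ≤ n → f.coeff (m : ℤ) = g.coeff (m : ℤ)) → g ∈ A) :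
    IsCCompact K (laurentTop K) A := by
  intro ι L hL hfil x hxA hcompat
  rcases isEmpty_or_nonempty ι with hι | hι
  · exact ⟨0, hz, fun i => (hι.false i).elim⟩
  have hL0 : ∀ i, (0 : LaurentSeries K) ∈ L i := fun i => (hL i).1.1.1
  have hLadd : ∀ i, ∀ f ∈ L i, ∀ g ∈ L i, f + g ∈ L i := fun i => (hL i).1.1.2.1
  have hLsmul : ∀ i, ∀ c : K, ‖c‖ ≤ 1 → ∀ f ∈ L i, c • f ∈ L i := fun i => (hL i).1.1.2.2
  have hLsub : ∀ i, ∀ f ∈ L i, ∀ g ∈ L i, f - g ∈ L i := by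
    intro i f hf g hg
    have h1 : -g ∈ L i := by
      have h2 := hLsmul i (-1) (by simp) g hg
      have h3 : (-1 : K) • g = -g := by
        ext m
        rw [HahnSeries.coeff_smul, HahnSeries.coeff_neg, smul_eq_mul, neg_one_mul]
      rwa [h3] at h2
    rw [sub_eq_add_neg]
    exact hLadd i f hf _ h1
  set Q : (ℕ → K) → ℕ → Prop := fun a n => ∀ i, ∃ f : LaurentSeries K,
      f ∈ A ∧ f - x i ∈ L i ∧ ∀ m : ℕ, m < n → f.coeff (m : ℤ) = a m with hQdef
  have hstep : ∀ (a : ℕ → K) (n : ℕ), Q a n → ∃ c : K, Q (Function.update a n c) (n + 1) := by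
    intro a n hQa
    set D : ι → Set K := fun i => {c : K | ∃ f : LaurentSeries K, f ∈ A ∧ f - x i ∈ L i ∧
        (∀ m : ℕ, m < n → f.coeff (m : ℤ) = a m) ∧ f.coeff (n : ℤ) = c} with hDdef
    have hne : ∀ i, (D i).Nonempty := by
      intro i
      obtain ⟨f, h1, h2, h3⟩ := hQa i
      exact ⟨f.coeff (n : ℤ), f, h1, h2, h3, rfl⟩
    have hshape : ∀ i, D i = Set.univ ∨ ∃ d x₀ : K, D i = {c : K | ‖c - d‖ ≤ ‖x₀‖} := by
      intro i
      obtain ⟨f₀, hf₀A, hf₀L, hf₀c⟩ := hQa i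
      set P : Set K := {c : K | ∃ g : LaurentSeries K, g ∈ A ∧ g ∈ L i ∧
          (∀ m : ℕ, m < n → g.coeff (m : ℤ) = 0) ∧ g.coeff (n : ℤ) = c} with hPdef
      have hDP : D i = {c : K | c - f₀.coeff (n : ℤ) ∈ P} := by
        ext c
        constructor
        · rintro ⟨f, h1, h2, h3, h4⟩
          refine ⟨f - f₀, hsub f h1 f₀ hf₀A, ?_, ?_, ?_⟩
          · have h5 := hLsub i _ h2 _ hf₀L
            rwa [sub_sub_sub_cancel_right] at h5
          · intro m hm
            rw [HahnSeries.coeff_sub, h3 m hm, hf₀c m hm, sub_self]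
          · rw [HahnSeries.coeff_sub, h4]
        · rintro ⟨g, h1, h2, h3, h4⟩
          refine ⟨f₀ + g, hadd f₀ hf₀A g h1, ?_, ?_, ?_⟩
          · have h5 := hLadd i _ hf₀L _ h2
            rwa [sub_add_eq_add_sub] at h5
          · intro m hm
            rw [HahnSeries.coeff_add, hf₀c m hm, h3 m hm, add_zero]
          · rw [HahnSeries.coeff_add, h4]; ring
      have hP0 : (0 : K) ∈ P := ⟨0, hz, hL0 i, fun m _ => by simp, by simp⟩
      have hPsmul : ∀ c : K, ‖c‖ ≤ 1 → ∀ p ∈ P, c * p ∈ P := by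
        rintro c hc p ⟨g, h1, h2, h3, h4⟩
        refine ⟨c • g, hsmul c hc g h1, hLsmul i c hc g h2, ?_, ?_⟩
        · intro m hm; rw [HahnSeries.coeff_smul, h3 m hm, smul_zero]
        · rw [HahnSeries.coeff_smul, h4, smul_eq_mul]
      rcases classify_submodule hK P hP0 hPsmul with h | ⟨x₀, _, hPx⟩
      · left; rw [hDP, h]; ext c; simp
      · right
        refine ⟨f₀.coeff (n : ℤ), x₀, ?_⟩
        rw [hDP, hPx]
        rfl
    have hdir : ∀ i j, ∃ k, D k ⊆ D i ∧ D k ⊆ D j := by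
      intro i j
      obtain ⟨k, hki, hkj⟩ := hfil i j
      have key : ∀ i' : ι, L k ⊆ L i' → D k ⊆ D i' := by
        rintro i' hsubL c ⟨f, h1, h2, h3, h4⟩
        refine ⟨f, h1, ?_, h3, h4⟩
        have h5 : x k - x i' ∈ L i' := hcompat i' k hsubL
        have h6 := hLadd i' _ (hsubL h2) _ h5
        rwa [sub_add_sub_cancel] at h6
      exact ⟨k, key i hki, key j hkj⟩
    obtain ⟨c, hc⟩ := core_directed hK D hne hshape hdir
    refine ⟨c, fun i => ?_⟩
    obtain ⟨f, h1, h2, h3, h4⟩ := hc i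
    refine ⟨f, h1, h2, fun m hm => ?_⟩
    rcases Nat.lt_succ_iff_lt_or_eq.mp hm with h | h
    · rw [Function.update_of_ne (by omega)]
      exact h3 m h
    · subst h
      rw [Function.update_self]
      exact h4
  have hQ0 : Q (fun _ => 0) 0 := by
    intro i
    exact ⟨x i, hxA i, by rw [sub_self]; exact hL0 i, fun m hm => absurd hm (Nat.not_lt_zero m)⟩
  let seq : ∀ n : ℕ, {a : ℕ → K // Q a n} := fun n =>
    Nat.rec ⟨fun _ => 0, hQ0⟩
      (fun n p => ⟨Function.update p.1 n (Classical.choose (hstep p.1 n p.2)),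
        Classical.choose_spec (hstep p.1 n p.2)⟩) n
  have hseq : ∀ n m : ℕ, m ≠ n → (seq (n+1)).1 m = (seq n).1 m := by
    intro n m hm
    show Function.update (seq n).1 n _ m = (seq n).1 m
    rw [Function.update_of_ne hm]
  set af : ℕ → K := fun m => (seq (m+1)).1 m with hafdef
  have hagree : ∀ n m : ℕ, m < n → (seq n).1 m = af m := by
    intro n
    induction n with
    | zero => intro m hm; exact absurd hm (Nat.not_lt_zero m)
    | succ n ih =>
      intro m hm
      rcases Nat.lt_succ_iff_lt_or_eq.mp hm with h | h
      · rw [hseq n m (by omega), ih m h]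
      · rw [h]
  have hQfin : ∀ n, Q af n := by
    intro n i
    obtain ⟨f, h1, h2, h3⟩ := (seq n).2 i
    exact ⟨f, h1, h2, fun m hm => (h3 m hm).trans (hagree n m hm)⟩
  set g : LaurentSeries K := HahnSeries.ofPowerSeries ℤ K (PowerSeries.mk af) with hgdef
  have hgneg : ∀ m : ℤ, m < 0 → g.coeff m = 0 := by
    intro m hm
    rw [hgdef, HahnSeries.ofPowerSeries_apply, HahnSeries.embDomain_notin_range]
    rintro ⟨n, hn⟩
    simp at hn
    omega
  have hgnat : ∀ m : ℕ, g.coeff (m : ℤ) = af m := by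
    intro m
    rw [hgdef, HahnSeries.ofPowerSeries_apply_coeff, PowerSeries.coeff_mk]
  have hgA : g ∈ A := by
    refine happrox g hgneg fun n => ?_
    obtain ⟨f, h1, h2, h3⟩ := hQfin (n+1) (Classical.arbitrary ι)
    exact ⟨f, h1, fun m hm => by rw [h3 m (by omega), hgnat m]⟩
  refine ⟨g, hgA, fun i => ?_⟩
  obtain ⟨N, hN⟩ := exists_zeroCyl_subset (hL i).2 (hL0 i)
  obtain ⟨f, hfA, hfL, hfc⟩ := hQfin N.toNat i
  have hgf : g - f ∈ L i := by
    refine hN (g - f) fun m hm => ?_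
    rw [HahnSeries.coeff_sub]
    rcases lt_or_ge m 0 with h | h
    · rw [hgneg m h, hneg0 f hfA m h, sub_zero]
    · have hmn : m.toNat < N.toNat := by omega
      have e1 : g.coeff m = af m.toNat := by
        conv_lhs => rw [← Int.toNat_of_nonneg h]
        exact hgnat m.toNat
      have e2 : f.coeff m = af m.toNat := by
        conv_lhs => rw [← Int.toNat_of_nonneg h]
        exact hfc m.toNat hmn
      rw [e1, e2, sub_self]
  have h7 := hLadd i _ hgf _ hfL
  rwa [sub_add_sub_cancel] at h7

lemma not_compactoid_aux {q : ℕ} (hK : IsCharZeroLocalField K q) (A : Set (LaurentSeries K))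
    (j₀ : ℤ) (hbig : ∀ c : K, (HahnSeries.single j₀ c : LaurentSeries K) ∈ A) :
    ¬ IsCompactoid K (laurentTop K) A := by
  intro h
  have hq1 : (1:ℝ) < (q:ℝ) := by exact_mod_cast hK.one_lt_q
  set Λ : Set (LaurentSeries K) := {f | ‖f.coeff j₀‖ ≤ 1} with hΛ
  have hlat : IsLatticeSet K Λ := by
    refine ⟨⟨by simp [hΛ], ?_, ?_⟩, ?_⟩
    · intro f hf g hg
      show ‖(f+g).coeff j₀‖ ≤ 1
      rw [HahnSeries.coeff_add]
      exact (hK.nonarch _ _).trans (max_le hf hg)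
    · intro c hc f hf
      show ‖(c • f).coeff j₀‖ ≤ 1
      rw [HahnSeries.coeff_smul, smul_eq_mul, norm_mul]
      have := mul_le_mul hc hf (norm_nonneg _) zero_le_one
      simpa using this
    · intro v
      obtain ⟨π, hπ⟩ := hK.exists_uniformizer
      have hπn : ‖π‖ < 1 := by rw [hπ]; exact inv_lt_one_of_one_lt₀ hq1
      have hπ0 : π ≠ 0 := by
        intro h0
        rw [h0, norm_zero] at hπ
        have hq0 : (0:ℝ) < (q:ℝ)⁻¹ := by positivity
        rw [← hπ] at hq0
        exact lt_irrefl 0 hq0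
      rcases le_or_gt ‖v.coeff j₀‖ 1 with hv | hv
      · refine ⟨1, one_ne_zero, ?_⟩
        show ‖((1:K) • v).coeff j₀‖ ≤ 1
        rw [HahnSeries.coeff_smul]
        simpa using hv
      · obtain ⟨n, hn⟩ := exists_pow_lt_of_lt_one
          (show (0:ℝ) < ‖v.coeff j₀‖⁻¹ by positivity) hπn
        refine ⟨π ^ n, pow_ne_zero n hπ0, ?_⟩
        show ‖(π ^ n • v).coeff j₀‖ ≤ 1
        rw [HahnSeries.coeff_smul, smul_eq_mul, norm_mul, norm_pow]
        have hvpos : (0:ℝ) < ‖v.coeff j₀‖ := by linarith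
        have h2 := mul_lt_mul_of_pos_right hn hvpos
        rw [inv_mul_cancel₀ (ne_of_gt hvpos)] at h2
        linarith
  have hopen : IsOpen[laurentTop K] Λ := by
    rw [isOpen_laurentTop_iff]
    intro a ha
    set U : ℤ → Set K := fun i => if i = j₀ then {x : K | ‖x‖ < 1} else Set.univ with hU
    refine ⟨{f : LaurentSeries K | ∀ i, f.coeff i ∈ U i}, ⟨U, fun i => ?_,
      ⟨j₀ + 1, fun i hi => ?_⟩, rfl⟩, fun w hw => ?_⟩
    · simp only [hU]
      by_cases h' : i = j₀
      · rw [if_pos h']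
        constructor
        · exact isOpen_lt continuous_norm continuous_const
        · simp
      · rw [if_neg h']
        exact ⟨isOpen_univ, Set.mem_univ 0⟩
    · show (if i = j₀ then {x : K | ‖x‖ < 1} else Set.univ) = Set.univ
      rw [if_neg (by omega)]
    · show ‖(a + w).coeff j₀‖ ≤ 1
      rw [HahnSeries.coeff_add]
      refine (hK.nonarch _ _).trans (max_le ha ?_)
      have hwj := hw j₀
      simp only [hU, if_pos] at hwj
      exact le_of_lt hwj
  obtain ⟨m, v, hv⟩ := h Λ hlat hopen
  obtain ⟨c, hc⟩ := NormedField.exists_lt_norm K (1 + ∑ j : Fin m, ‖(v j).coeff j₀‖)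
  obtain ⟨l, hl, cs, hcs, heq⟩ := hv (hbig c)
  have hsumc : ∀ s : Finset (Fin m),
      (∑ j ∈ s, cs j • v j).coeff j₀ = ∑ j ∈ s, cs j * (v j).coeff j₀ := by
    intro s
    induction s using Finset.induction with
    | empty => simp
    | insert a s hnotmem ih =>
      rw [Finset.sum_insert hnotmem, Finset.sum_insert hnotmem, HahnSeries.coeff_add,
        HahnSeries.coeff_smul, smul_eq_mul, ih]
  have hcoeff : c = l.coeff j₀ + ∑ j : Fin m, cs j * (v j).coeff j₀ := by
    have h1 := congrArg (fun u : LaurentSeries K => u.coeff j₀) heq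
    rw [HahnSeries.coeff_add, hsumc Finset.univ] at h1
    rw [← h1, HahnSeries.coeff_single_same]
  have hle : ‖c‖ ≤ 1 + ∑ j : Fin m, ‖(v j).coeff j₀‖ := by
    rw [hcoeff]
    refine (norm_add_le _ _).trans (add_le_add hl ?_)
    refine (norm_sum_le _ _).trans (Finset.sum_le_sum fun j _ => ?_)
    rw [norm_mul]
    exact mul_le_of_le_one_left (norm_nonneg _) (hcs j)
  linarith

end Statement13Aux


/-- In `K((t))` with the higher topology, the ring of integers `K[[t]]` and
the rank-two ring of integers `𝒪 + tK[[t]]` are c-compact `𝒪`-submodules, but neither of them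
is compactoid. -/
theorem statement13 (q : ℕ) (hK : IsCharZeroLocalField K q) :
    IsCCompact K (laurentTop K) (laurentIntegers K) ∧
    IsCCompact K (laurentTop K) (laurentRankTwo K) ∧
    ¬ IsCompactoid K (laurentTop K) (laurentIntegers K) ∧
    ¬ IsCompactoid K (laurentTop K) (laurentRankTwo K) := by
  have hInt : IsCCompact K (laurentTop K) (laurentIntegers K) := by
    refine ccompact_of hK (laurentIntegers K)
      (fun i _ => HahnSeries.coeff_zero)
      (fun f hf g hg i hi => by rw [HahnSeries.coeff_add, hf i hi, hg i hi, add_zero])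
      (fun f hf g hg i hi => by rw [HahnSeries.coeff_sub, hf i hi, hg i hi, sub_zero])
      (fun c hc f hf i hi => by rw [HahnSeries.coeff_smul, hf i hi, smul_zero])
      (fun f hf => hf)
      (fun g hgneg _ => hgneg)
  have hRk : IsCCompact K (laurentTop K) (laurentRankTwo K) := by
    refine ccompact_of hK (laurentRankTwo K)
      ⟨fun i _ => HahnSeries.coeff_zero, by
        rw [HahnSeries.coeff_zero, norm_zero]; exact zero_le_one⟩
      (fun f hf g hg => ⟨fun i hi => by
          rw [HahnSeries.coeff_add, hf.1 i hi, hg.1 i hi, add_zero],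
        by rw [HahnSeries.coeff_add]; exact (hK.nonarch _ _).trans (max_le hf.2 hg.2)⟩)
      (fun f hf g hg => ⟨fun i hi => by
          rw [HahnSeries.coeff_sub, hf.1 i hi, hg.1 i hi, sub_zero],
        by rw [HahnSeries.coeff_sub]; exact (nonarch_sub hK _ _).trans (max_le hf.2 hg.2)⟩)
      (fun c hc f hf => ⟨fun i hi => by
          rw [HahnSeries.coeff_smul, hf.1 i hi, smul_zero],
        by
          rw [HahnSeries.coeff_smul, smul_eq_mul, norm_mul]
          have := mul_le_mul hc hf.2 (norm_nonneg _) zero_le_one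
          simpa using this⟩)
      (fun f hf => hf.1)
      (fun g hgneg happ => by
        refine ⟨hgneg, ?_⟩
        obtain ⟨f, hfA, hfc⟩ := happ 0
        have h0 := hfc 0 le_rfl
        simp only [Nat.cast_zero] at h0
        rw [← h0]
        exact hfA.2)
  have hnc1 : ¬ IsCompactoid K (laurentTop K) (laurentIntegers K) :=
    not_compactoid_aux hK (laurentIntegers K) 0
      (fun c i hi => by rw [HahnSeries.coeff_single]; exact if_neg (by omega))
  have hnc2 : ¬ IsCompactoid K (laurentTop K) (laurentRankTwo K) :=
    not_compactoid_aux hK (laurentRankTwo K) 1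
      (fun c => ⟨fun i hi => by rw [HahnSeries.coeff_single]; exact if_neg (by omega),
        by
          rw [HahnSeries.coeff_single, if_neg (by norm_num), norm_zero]
          exact zero_le_one⟩)
  exact ⟨hInt, hRk, hnc1, hnc2⟩

end TwoDimLF
end
end

section
/- Let F = K((t)) or F = K{{t}} with the higher topology, and let A = Σ_{i∈ℤ} 𝔭^{k_i} t^i be an 𝒪-submodule of F with k_i ∈ ℤ ∪ {±∞}. Then the pseudo-polar of A satisfies A^γ := γ^{-1}(A^p) = Σ_{i∈ℤ} 𝔭^{1-k_{-i}} t^i, where γ(x)(y) = π_0(xy); consequently the pseudo-bipolar of A equals A itself: A^{pp} = A. -/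
/-!
Common setting: `K` is a characteristic-zero local field (a finite extension of `ℚ_p`)
with ring of integers `𝒪 = {c : K | ‖c‖ ≤ 1}`, maximal ideal `𝔭 = {c : K | ‖c‖ < 1}`,
residue field of cardinality `q` and the absolute value normalised by `‖π‖ = q⁻¹`.
We formalise the two-dimensional local fields `K((t))` (as `LaurentSeries K`) and
`K{{t}}` (as the submodule `mixedCarrier K` of `ℤ → K`), their higher topologies, and
the relevant functional-analytic notions (lattices, seminorms, boundedness,
c-compactness, compactoidness, completeness for nets, duality).
-/

open Filter Topology Set Pointwise
open scoped Classical

noncomputable section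

namespace TwoDimLF

variable (K : Type) [NontriviallyNormedField K]

section Helpers

set_option maxHeartbeats 1000000 in
section
variable {K} {q : ℕ}

lemma norm_sum_le_of_nonarch (hna : ∀ x y : K, ‖x + y‖ ≤ max ‖x‖ ‖y‖) {r : ℝ} (hr : 0 ≤ r)
    {ι : Type} (s : Finset ι) (f : ι → K) (h : ∀ i ∈ s, ‖f i‖ ≤ r) :
    ‖∑ i ∈ s, f i‖ ≤ r := by
  classical
  induction s using Finset.induction_on with
  | empty => simpa using hr
  | insert a t hx ih =>
    rw [Finset.sum_insert hx]
    refine (hna _ _).trans (max_le (h a (Finset.mem_insert_self a t)) ?_)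
    exact ih fun i hi => h i (Finset.mem_insert_of_mem hi)

lemma norm_hasSum_le (hna : ∀ x y : K, ‖x + y‖ ≤ max ‖x‖ ‖y‖) {r : ℝ} (hr : 0 ≤ r)
    {f : ℤ → K} {a : K} (hs : HasSum f a) (h : ∀ i, ‖f i‖ ≤ r) : ‖a‖ ≤ r := by
  refine le_of_tendsto hs.norm ?_
  exact Filter.Eventually.of_forall fun s => norm_sum_le_of_nonarch hna hr s f fun i _ => h i

lemma isOpen_mul_ball (hna : ∀ x y : K, ‖x + y‖ ≤ max ‖x‖ ‖y‖) {d e : ℝ} (he : 0 < e) :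
    IsOpen {c : K | ‖c‖ * d ≤ e} := by
  rcases le_or_gt d 0 with hd | hd
  · have : {c : K | ‖c‖ * d ≤ e} = Set.univ := by
      ext c
      simp only [Set.mem_setOf_eq, Set.mem_univ, iff_true]
      exact le_trans (mul_nonpos_of_nonneg_of_nonpos (norm_nonneg c) hd) he.le
    rw [this]; exact isOpen_univ
  · rw [Metric.isOpen_iff]
    intro c hc
    refine ⟨e / d, div_pos he hd, fun a ha => ?_⟩
    simp only [Metric.mem_ball, dist_eq_norm] at ha
    have h1 : ‖a‖ ≤ max ‖a - c‖ ‖c‖ := by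
      have := hna (a - c) c; simpa using this
    have : ‖a‖ * d ≤ max (‖a - c‖ * d) (‖c‖ * d) := by
      rw [← max_mul_of_nonneg _ _ hd.le]
      exact mul_le_mul_of_nonneg_right h1 hd.le
    refine this.trans (max_le ?_ hc)
    calc ‖a - c‖ * d ≤ (e / d) * d := mul_le_mul_of_nonneg_right ha.le hd.le
    _ = e := div_mul_cancel₀ e hd.ne'

lemma isOpen_ball' (hna : ∀ x y : K, ‖x + y‖ ≤ max ‖x‖ ‖y‖) {e : ℝ} (he : 0 < e) :
    IsOpen {c : K | ‖c‖ ≤ e} := by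
  have := isOpen_mul_ball hna (d := 1) he
  simpa using this


lemma hq_real (hq : 1 < q) : (1:ℝ) < q := by exact_mod_cast hq
lemma hq_pos (hq : 1 < q) : (0:ℝ) < q := lt_trans one_pos (hq_real hq)

lemma zero_mem_pE (hq : 1 < q) (m : WithBot (WithTop ℤ)) : (0:K) ∈ pE K q m := by
  induction m using WithBot.recBotCoe with
  | bot => trivial
  | coe m' =>
    induction m' using WithTop.recTopCoe with
    | top => rfl
    | coe z =>
      show ‖(0:K)‖ ≤ (q:ℝ) ^ (-z)
      rw [norm_zero]
      exact (zpow_pos (hq_pos hq) _).le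

lemma oneSubE_oneSubE (m : WithBot (WithTop ℤ)) : oneSubE (oneSubE m) = m := by
  induction m using WithBot.recBotCoe with
  | bot => rfl
  | coe m' =>
    induction m' using WithTop.recTopCoe with
    | top => rfl
    | coe z =>
      show (((1 - (1 - z) : ℤ) : WithTop ℤ) : WithBot (WithTop ℤ)) = _
      norm_num

lemma fwd (hK : IsCharZeroLocalField K q) {m : WithBot (WithTop ℤ)} {a c : K}
    (ha : a ∈ pE K q (oneSubE m)) (hc : c ∈ pE K q m) : ‖c * a‖ ≤ (q:ℝ)⁻¹ := by
  have hq := hq_real hK.one_lt_q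
  have hq0 := hq_pos hK.one_lt_q
  induction m using WithBot.recBotCoe with
  | bot =>
    have : a = 0 := ha
    simp [this, (inv_pos.mpr hq0).le]
  | coe m' =>
    induction m' using WithTop.recTopCoe with
    | top =>
      have : c = 0 := hc
      simp [this, (inv_pos.mpr hq0).le]
    | coe z =>
      have ha' : ‖a‖ ≤ (q:ℝ) ^ (-(1 - z)) := ha
      have hc' : ‖c‖ ≤ (q:ℝ) ^ (-z) := hc
      rw [norm_mul]
      calc ‖c‖ * ‖a‖ ≤ (q:ℝ) ^ (-z) * (q:ℝ) ^ (-(1 - z)) :=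
            mul_le_mul hc' ha' (norm_nonneg a) (zpow_pos hq0 _).le
        _ = (q:ℝ) ^ (-z + -(1 - z)) := (zpow_add₀ hq0.ne' _ _).symm
        _ = (q:ℝ)⁻¹ := by
            have : -z + -(1 - z) = (-1 : ℤ) := by ring
            rw [this, zpow_neg_one]

lemma back (hK : IsCharZeroLocalField K q) {m : WithBot (WithTop ℤ)} {a : K}
    (h : ∀ c ∈ pE K q m, ‖c * a‖ < 1) : a ∈ pE K q (oneSubE m) := by
  have hq := hq_real hK.one_lt_q
  have hq0 := hq_pos hK.one_lt_q
  obtain ⟨π, hπ⟩ := hK.exists_uniformizer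
  have hπ0 : π ≠ 0 := by
    intro h0
    rw [h0, norm_zero] at hπ
    exact (inv_pos.mpr hq0).ne' hπ.symm
  induction m using WithBot.recBotCoe with
  | bot =>
    -- need a = 0
    show a = 0
    by_contra ha
    have hna : 0 < ‖a‖ := norm_pos_iff.mpr ha
    obtain ⟨n, hn⟩ := pow_unbounded_of_one_lt (‖a‖⁻¹) hq
    have hc : ‖(π⁻¹ : K) ^ n * a‖ < 1 := h _ trivial
    rw [norm_mul, norm_pow, norm_inv, hπ, inv_inv] at hc
    have : ‖a‖⁻¹ * ‖a‖ < (q:ℝ) ^ n * ‖a‖ := by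
      exact mul_lt_mul_of_pos_right hn hna
    rw [inv_mul_cancel₀ hna.ne'] at this
    exact absurd hc (not_lt.mpr this.le)
  | coe m' =>
    induction m' using WithTop.recTopCoe with
    | top => trivial
    | coe z =>
      show ‖a‖ ≤ (q:ℝ) ^ (-(1 - z))
      rcases eq_or_ne a 0 with rfl | ha
      · rw [norm_zero]; exact (zpow_pos hq0 _).le
      have hmem : (π ^ z : K) ∈ pE K q ((z : WithTop ℤ) : WithBot (WithTop ℤ)) := by
        show ‖(π:K) ^ z‖ ≤ (q:ℝ) ^ (-z)
        rw [norm_zpow, hπ, inv_zpow, ← zpow_neg]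
      have hlt := h _ hmem
      rw [norm_mul, norm_zpow, hπ] at hlt
      have hπz : ((q:ℝ)⁻¹) ^ z = (q:ℝ) ^ (-z) := by rw [inv_zpow, ← zpow_neg]
      rw [hπz] at hlt
      -- hlt : q^(-z) * ‖a‖ < 1 so ‖a‖ < q^z
      have haz : ‖a‖ < (q:ℝ) ^ z := by
        have h2 : ‖a‖ * (q:ℝ) ^ (-z) < 1 := by rwa [mul_comm] at hlt
        have h3 : ‖a‖ < 1 / (q:ℝ) ^ (-z) := (lt_div_iff₀ (zpow_pos hq0 (-z))).mpr h2
        rwa [one_div, ← zpow_neg, neg_neg] at h3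
      obtain ⟨n, hn⟩ := hK.norm_values a ha
      rw [hn] at haz ⊢
      have : -n < z := by
        exact (zpow_lt_zpow_iff_right₀ hq).mp haz
      have : -n ≤ z - 1 := by omega
      calc (q:ℝ) ^ (-n) ≤ (q:ℝ) ^ (z - 1) := (zpow_le_zpow_iff_right₀ hq).mpr this
        _ = (q:ℝ) ^ (-(1 - z)) := by ring_nf


lemma laurent_lb (x : LaurentSeries K) : ∃ N : ℤ, ∀ i < N, x.coeff i = 0 := by
  rcases eq_or_ne x 0 with rfl | hx
  · exact ⟨0, fun i _ => rfl⟩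
  · exact ⟨x.order, fun i hi => HahnSeries.coeff_eq_zero_of_lt_order hi⟩

lemma laurent_fin (x y : LaurentSeries K) :
    ∃ s : Finset ℤ, ∀ i ∉ s, x.coeff i * y.coeff (-i) = 0 := by
  obtain ⟨N, hN⟩ := laurent_lb x
  obtain ⟨M, hM⟩ := laurent_lb y
  refine ⟨Finset.Icc N (-M), fun i hi => ?_⟩
  rw [Finset.mem_Icc, not_and_or] at hi
  rcases hi with h | h
  · rw [hN i (by omega), zero_mul]
  · rw [hM (-i) (by omega), mul_zero]

lemma laurent_hasSum (x y : LaurentSeries K) :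
    HasSum (fun i => x.coeff i * y.coeff (-i)) (laurentPairing K x y) := by
  obtain ⟨s, hs⟩ := laurent_fin x y
  have h := hasSum_sum_of_ne_finset_zero (L := SummationFilter.unconditional ℤ) (s := s) (f := fun i => x.coeff i * y.coeff (-i)) hs
  rwa [laurentPairing, h.tsum_eq]

lemma laurentPairing_add (x y z : LaurentSeries K) :
    laurentPairing K x (y + z) = laurentPairing K x y + laurentPairing K x z := by
  have h3 : HasSum (fun i => x.coeff i * (y + z).coeff (-i))
      (laurentPairing K x y + laurentPairing K x z) := by
    have h := (laurent_hasSum x y).add (laurent_hasSum x z)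
    refine HasSum.congr_fun h fun i => ?_
    simp [HahnSeries.coeff_add, mul_add]
  exact (laurent_hasSum x (y + z)).unique h3

lemma laurentPairing_smul (x y : LaurentSeries K) (c : K) :
    laurentPairing K x (c • y) = c * laurentPairing K x y := by
  have h3 : HasSum (fun i => x.coeff i * (c • y).coeff (-i)) (c * laurentPairing K x y) := by
    have h := (laurent_hasSum x y).mul_left c
    refine HasSum.congr_fun h fun i => ?_
    simp [HahnSeries.coeff_smul, smul_eq_mul]; ring
  exact (laurent_hasSum x (c • y)).unique h3

lemma laurentPairing_single (x : LaurentSeries K) (i : ℤ) (c : K) :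
    laurentPairing K x (HahnSeries.single (-i) c) = x.coeff i * c := by
  rw [laurentPairing]
  rw [tsum_eq_single i]
  · rw [HahnSeries.coeff_single_same]
  · intro j hj
    rw [HahnSeries.coeff_single_of_ne (by omega), mul_zero]

lemma laurentPairing_single_left (i : ℤ) (c : K) (v : LaurentSeries K) :
    laurentPairing K (HahnSeries.single (-i) c) v = c * v.coeff i := by
  rw [laurentPairing]
  rw [tsum_eq_single (-i)]
  · rw [HahnSeries.coeff_single_same, neg_neg]
  · intro j hj
    rw [HahnSeries.coeff_single_of_ne hj, zero_mul]

lemma isOpen_addTopologyOf {W : Type} [AddCommGroup W] {B : Set (Set W)} {S : Set W}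
    (h : ∀ a ∈ S, ∃ U ∈ B, ∀ u ∈ U, a + u ∈ S) : IsOpen[addTopologyOf B] S := by
  intro a ha
  obtain ⟨U, hUB, hU⟩ := h a ha
  rw [Filter.mem_map]
  exact Filter.mem_of_superset
    (Filter.mem_iInf_of_mem U (Filter.mem_iInf_of_mem hUB (Filter.mem_principal_self U)))
    (fun u hu => hU u hu)


lemma laurent_continuous (hna : ∀ x y : K, ‖x + y‖ ≤ max ‖x‖ ‖y‖) (x : LaurentSeries K) :
    @Continuous _ _ (laurentTop K) _ (laurentPairing K x) := by
  rw [@continuous_def _ _ (laurentTop K) _]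
  intro V hV
  apply isOpen_addTopologyOf
  intro x₀ hx₀
  obtain ⟨ε, hε, hball⟩ := Metric.isOpen_iff.mp hV _ hx₀
  obtain ⟨N, hN⟩ := laurent_lb x
  set U : ℤ → Set K := fun i =>
    if -N < i then Set.univ else {c : K | ‖c‖ * ‖x.coeff (-i)‖ ≤ ε/2} with hU
  refine ⟨{f : LaurentSeries K | ∀ i, f.coeff i ∈ U i}, ?_, ?_⟩
  · refine ⟨U, fun i => ?_, ⟨-N + 1, fun i hi => ?_⟩, rfl⟩
    · by_cases h : -N < i
      · simp [hU, h]
      · simp only [hU, if_neg h]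
        exact ⟨isOpen_mul_ball hna (by linarith), by simp; positivity⟩
    · simp [hU, if_pos (by omega : -N < i)]
  · intro u hu
    simp only [Set.mem_preimage]
    rw [laurentPairing_add]
    apply hball
    rw [Metric.mem_ball, dist_eq_norm, add_sub_cancel_left]
    have hle : ‖laurentPairing K x u‖ ≤ ε/2 := by
      refine norm_hasSum_le hna (by linarith) (laurent_hasSum x u) fun i => ?_
      have hui := hu (-i)
      by_cases h : -N < -i
      · rw [hN i (by omega), zero_mul, norm_zero]; linarith
      · simp only [hU, if_neg h, Set.mem_setOf_eq, neg_neg] at hui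
        rw [norm_mul, mul_comm]
        exact hui
    linarith

lemma laurent_polar (hK : IsCharZeroLocalField K q) (k : ℤ → WithBot (WithTop ℤ)) :
    {x : LaurentSeries K |
        laurentPairing K x ∈ pseudoPolar K (laurentTop K) (laurentPE K q k)} =
      laurentPE K q (fun i => oneSubE (k (-i))) := by
  have hq := hq_real hK.one_lt_q
  ext x
  constructor
  · rintro ⟨-, hbound⟩ i
    refine back hK fun c hc => ?_
    have hy : HahnSeries.single (-i) c ∈ laurentPE K q k := by
      intro j
      rcases eq_or_ne j (-i) with rfl | hj
      · rwa [HahnSeries.coeff_single_same]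
      · rw [HahnSeries.coeff_single_of_ne hj]
        exact zero_mem_pE hK.one_lt_q _
    have := hbound _ hy
    rwa [laurentPairing_single, mul_comm] at this
  · intro hx
    refine ⟨⟨⟨fun y z => laurentPairing_add x y z, fun c y => laurentPairing_smul x y c⟩,
      laurent_continuous hK.nonarch x⟩, fun y hy => ?_⟩
    have hle : ‖laurentPairing K x y‖ ≤ (q:ℝ)⁻¹ := by
      refine norm_hasSum_le hK.nonarch (by positivity) (laurent_hasSum x y) fun i => ?_
      rw [mul_comm]
      exact fwd hK (hx i) (hy (-i))
    calc ‖laurentPairing K x y‖ ≤ (q:ℝ)⁻¹ := hle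
      _ < 1 := by
        rw [inv_lt_one_iff₀]; right; exact hq

lemma laurent_bipolar (hK : IsCharZeroLocalField K q) (k : ℤ → WithBot (WithTop ℤ)) :
    pseudoBipolar K (laurentTop K) (laurentPE K q k) = laurentPE K q k := by
  ext v
  constructor
  · intro hv i
    have : v.coeff i ∈ pE K q (oneSubE (oneSubE (k i))) := by
      refine back hK fun c hc => ?_
      have hx : HahnSeries.single (-i) c ∈ laurentPE K q (fun j => oneSubE (k (-j))) := by
        intro j
        rcases eq_or_ne j (-i) with rfl | hj
        · rw [HahnSeries.coeff_single_same]
          simpa using hc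
        · rw [HahnSeries.coeff_single_of_ne hj]
          exact zero_mem_pE hK.one_lt_q _
      have hmem : laurentPairing K (HahnSeries.single (-i) c)
          ∈ pseudoPolar K (laurentTop K) (laurentPE K q k) := by
        have := (laurent_polar hK k).symm ▸ hx
        exact this
      have := hv _ hmem
      rwa [laurentPairing_single_left] at this
    rwa [oneSubE_oneSubE] at this
  · intro hv l hl
    exact hl.2 v hv


lemma mixed_bound (x : Mt K) : ∃ C : ℝ, 1 ≤ C ∧ ∀ i, ‖x.1 i‖ ≤ C := by
  obtain ⟨C, hC⟩ := x.2.1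
  exact ⟨max C 1, le_max_right _ _, fun i => (hC i).trans (le_max_left _ _)⟩

lemma mixed_small (x : Mt K) {δ : ℝ} (hδ : 0 < δ) : ∃ j0 : ℤ, ∀ j ≤ j0, ‖x.1 j‖ < δ := by
  have h := Metric.tendsto_nhds.mp x.2.2 δ hδ
  rw [Filter.eventually_atBot] at h
  obtain ⟨j0, hj0⟩ := h
  exact ⟨j0, fun j hj => by simpa [dist_zero_right] using hj0 j hj⟩

lemma mixed_term_small (x y : Mt K) {δ : ℝ} (hδ : 0 < δ) :
    ∃ m M : ℤ, ∀ i, i < m ∨ M < i → ‖x.1 i * y.1 (-i)‖ < δ := by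
  obtain ⟨C, hC1, hC⟩ := mixed_bound x
  obtain ⟨D, hD1, hD⟩ := mixed_bound y
  obtain ⟨jx, hjx⟩ := mixed_small x (div_pos hδ (lt_of_lt_of_le one_pos hD1))
  obtain ⟨jy, hjy⟩ := mixed_small y (div_pos hδ (lt_of_lt_of_le one_pos hC1))
  refine ⟨jx, -jy - 1, fun i hi => ?_⟩
  rw [norm_mul]
  rcases hi with h | h
  · calc ‖x.1 i‖ * ‖y.1 (-i)‖ ≤ ‖x.1 i‖ * D :=
        mul_le_mul_of_nonneg_left (hD _) (norm_nonneg _)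
      _ < (δ / D) * D := mul_lt_mul_of_pos_right (hjx i h.le) (lt_of_lt_of_le one_pos hD1)
      _ = δ := div_mul_cancel₀ δ (by linarith)
  · calc ‖x.1 i‖ * ‖y.1 (-i)‖ ≤ C * ‖y.1 (-i)‖ :=
        mul_le_mul_of_nonneg_right (hC _) (norm_nonneg _)
      _ < C * (δ / C) := mul_lt_mul_of_pos_left (hjy (-i) (by omega)) (lt_of_lt_of_le one_pos hC1)
      _ = δ := mul_div_cancel₀ δ (by linarith)

lemma mixed_summable (hK : IsCharZeroLocalField K q) (x y : Mt K) :
    Summable (fun i => x.1 i * y.1 (-i)) := by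
  haveI := hK.complete
  rw [summable_iff_vanishing_norm]
  intro ε hε
  obtain ⟨m, M, h⟩ := mixed_term_small x y (half_pos hε)
  refine ⟨Finset.Icc m M, fun t ht => ?_⟩
  have : ‖∑ i ∈ t, x.1 i * y.1 (-i)‖ ≤ ε/2 := by
    refine norm_sum_le_of_nonarch hK.nonarch (by linarith) _ _ fun i hi => ?_
    have hnot : i ∉ Finset.Icc m M := fun hmem => (Finset.disjoint_left.mp ht hi) hmem
    rw [Finset.mem_Icc, not_and_or] at hnot
    exact (h i (by omega)).le
  linarith

lemma mixed_hasSum (hK : IsCharZeroLocalField K q) (x y : Mt K) :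
    HasSum (fun i => x.1 i * y.1 (-i)) (mixedPairing K x y) :=
  (mixed_summable hK x y).hasSum

lemma mixedPairing_add (hK : IsCharZeroLocalField K q) (x y z : Mt K) :
    mixedPairing K x (y + z) = mixedPairing K x y + mixedPairing K x z := by
  have h3 : HasSum (fun i => x.1 i * (y + z).1 (-i))
      (mixedPairing K x y + mixedPairing K x z) := by
    have h := (mixed_hasSum hK x y).add (mixed_hasSum hK x z)
    refine HasSum.congr_fun h fun i => ?_
    show x.1 i * ((y:ℤ → K) + (z:ℤ → K)) (-i) = _
    simp [mul_add]
  exact (mixed_hasSum hK x (y + z)).unique h3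

lemma mixedPairing_smul (hK : IsCharZeroLocalField K q) (x y : Mt K) (c : K) :
    mixedPairing K x (c • y) = c * mixedPairing K x y := by
  have h3 : HasSum (fun i => x.1 i * (c • y).1 (-i)) (c * mixedPairing K x y) := by
    have h := (mixed_hasSum hK x y).mul_left c
    refine HasSum.congr_fun h fun i => ?_
    show x.1 i * (c • (y:ℤ → K)) (-i) = _
    simp [smul_eq_mul]; ring
  exact (mixed_hasSum hK x (c • y)).unique h3

lemma mixedT_smul_coeff (c : K) (i j : ℤ) :
    (c • mixedT K i).1 j = if j = i then c else 0 := by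
  show (c • (mixedT K i : ℤ → K)) j = _
  simp [mixedT, mul_ite]

lemma mixedPairing_single (x : Mt K) (i : ℤ) (c : K) :
    mixedPairing K x (c • mixedT K (-i)) = x.1 i * c := by
  rw [mixedPairing, tsum_eq_single i]
  · rw [mixedT_smul_coeff, if_pos rfl]
  · intro j hj
    rw [mixedT_smul_coeff, if_neg (by omega), mul_zero]

lemma mixedPairing_single_left (i : ℤ) (c : K) (v : Mt K) :
    mixedPairing K (c • mixedT K (-i)) v = c * v.1 i := by
  rw [mixedPairing, tsum_eq_single (-i)]
  · rw [mixedT_smul_coeff, if_pos rfl, neg_neg]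
  · intro j hj
    rw [mixedT_smul_coeff, if_neg hj, zero_mul]


lemma mixed_continuous (hK : IsCharZeroLocalField K q) (x : Mt K) :
    @Continuous _ _ (mixedTop K q) _ (mixedPairing K x) := by
  have hq := hq_real hK.one_lt_q
  have hq0 := hq_pos hK.one_lt_q
  rw [@continuous_def _ _ (mixedTop K q) _]
  intro V hV
  apply isOpen_addTopologyOf
  intro x₀ hx₀
  obtain ⟨ε, hε, hball⟩ := Metric.isOpen_iff.mp hV _ hx₀
  set Vs : ℤ → Set K := fun i => {c : K | ‖c‖ * ‖x.1 (-i)‖ ≤ ε/2} with hVs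
  refine ⟨{f : Mt K | ∀ i, f.1 i ∈ Vs i}, ?_, ?_⟩
  · refine ⟨Vs, fun i => ⟨isOpen_mul_ball hK.nonarch (by linarith), by simp [hVs]; positivity⟩,
      ?_, ?_, rfl⟩
    · -- uniform c₀
      obtain ⟨C, hC1, hC⟩ := mixed_bound x
      obtain ⟨n, hn⟩ := exists_pow_lt_of_lt_one (div_pos (half_pos hε) (by linarith : (0:ℝ) < C))
        (by rw [inv_lt_one_iff₀]; right; exact hq : (q:ℝ)⁻¹ < 1)
      refine ⟨(n : ℤ), fun i c hc => ?_⟩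
      simp only [Set.mem_setOf_eq] at hc ⊢
      have hcn : ‖c‖ ≤ ((q:ℝ)⁻¹) ^ n := by
        rw [inv_pow, ← zpow_natCast, ← zpow_neg]
        exact hc
      calc ‖c‖ * ‖x.1 (-i)‖ ≤ ((q:ℝ)⁻¹) ^ n * C :=
            mul_le_mul hcn (hC _) (norm_nonneg _) (by positivity)
        _ ≤ (ε/2 / C) * C := mul_le_mul_of_nonneg_right hn.le (by linarith)
        _ = ε/2 := div_mul_cancel₀ _ (by linarith)
    · -- eventual l
      intro l
      obtain ⟨j0, hj0⟩ := mixed_small x (show (0:ℝ) < ε/2 / (q:ℝ)^(-l) by positivity)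
      refine ⟨-j0, fun i hi c hc => ?_⟩
      simp only [Set.mem_setOf_eq] at hc ⊢
      calc ‖c‖ * ‖x.1 (-i)‖ ≤ (q:ℝ)^(-l) * (ε/2 / (q:ℝ)^(-l)) :=
            mul_le_mul hc (hj0 (-i) (by omega)).le (norm_nonneg _) (zpow_pos hq0 _).le
        _ = ε/2 := mul_div_cancel₀ _ (zpow_pos hq0 _).ne'
  · intro u hu
    simp only [Set.mem_preimage]
    rw [mixedPairing_add hK]
    apply hball
    rw [Metric.mem_ball, dist_eq_norm, add_sub_cancel_left]
    have hle : ‖mixedPairing K x u‖ ≤ ε/2 := by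
      refine norm_hasSum_le hK.nonarch (by linarith) (mixed_hasSum hK x u) fun i => ?_
      have hui := hu (-i)
      simp only [hVs, Set.mem_setOf_eq, neg_neg] at hui
      rw [norm_mul, mul_comm]
      exact hui
    linarith

lemma mixed_polar (hK : IsCharZeroLocalField K q) (k : ℤ → WithBot (WithTop ℤ)) :
    {x : Mt K | mixedPairing K x ∈ pseudoPolar K (mixedTop K q) (mixedPE K q k)} =
      mixedPE K q (fun i => oneSubE (k (-i))) := by
  have hq := hq_real hK.one_lt_q
  ext x
  constructor
  · rintro ⟨-, hbound⟩ i
    refine back hK fun c hc => ?_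
    have hy : c • mixedT K (-i) ∈ mixedPE K q k := by
      intro j
      rw [mixedT_smul_coeff]
      rcases eq_or_ne j (-i) with rfl | hj
      · rwa [if_pos rfl]
      · rw [if_neg hj]
        exact zero_mem_pE hK.one_lt_q _
    have := hbound _ hy
    rwa [mixedPairing_single, mul_comm] at this
  · intro hx
    refine ⟨⟨⟨fun y z => mixedPairing_add hK x y z, fun c y => mixedPairing_smul hK x y c⟩,
      mixed_continuous hK x⟩, fun y hy => ?_⟩
    have hle : ‖mixedPairing K x y‖ ≤ (q:ℝ)⁻¹ := by
      refine norm_hasSum_le hK.nonarch (by positivity) (mixed_hasSum hK x y) fun i => ?_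
      rw [mul_comm]
      exact fwd hK (hx i) (hy (-i))
    calc ‖mixedPairing K x y‖ ≤ (q:ℝ)⁻¹ := hle
      _ < 1 := by rw [inv_lt_one_iff₀]; right; exact hq

lemma mixed_bipolar (hK : IsCharZeroLocalField K q) (k : ℤ → WithBot (WithTop ℤ)) :
    pseudoBipolar K (mixedTop K q) (mixedPE K q k) = mixedPE K q k := by
  ext v
  constructor
  · intro hv i
    have : v.1 i ∈ pE K q (oneSubE (oneSubE (k i))) := by
      refine back hK fun c hc => ?_
      have hx : c • mixedT K (-i) ∈ mixedPE K q (fun j => oneSubE (k (-j))) := by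
        intro j
        rw [mixedT_smul_coeff]
        rcases eq_or_ne j (-i) with rfl | hj
        · rw [if_pos rfl]; simpa using hc
        · rw [if_neg hj]; exact zero_mem_pE hK.one_lt_q _
      have hmem : mixedPairing K (c • mixedT K (-i))
          ∈ pseudoPolar K (mixedTop K q) (mixedPE K q k) := by
        rw [← mixed_polar hK k] at hx
        exact hx
      have := hv _ hmem
      rwa [mixedPairing_single_left] at this
    rwa [oneSubE_oneSubE] at this
  · intro hv l hl
    exact hl.2 v hv



end
end Helpers

set_option maxHeartbeats 1000000 in
/-- Let `F = K((t))` or `F = K{{t}}` with the higher topology and let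
`A = Σ_{i∈ℤ} 𝔭^{k_i} t^i` with `k_i ∈ ℤ ∪ {±∞}`. Then the pseudo-polar of `A` satisfies
`A^γ = γ⁻¹(A^p) = Σ_{i∈ℤ} 𝔭^{1-k_{-i}} t^i`, where `γ(x)(y) = π₀(xy)`; consequently the
pseudo-bipolar of `A` equals `A` itself: `A^{pp} = A`. -/
theorem statement19 (q : ℕ) (hK : IsCharZeroLocalField K q) :
    (∀ k : ℤ → WithBot (WithTop ℤ),
      {x : LaurentSeries K |
          laurentPairing K x ∈ pseudoPolar K (laurentTop K) (laurentPE K q k)} =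
        laurentPE K q (fun i => oneSubE (k (-i))) ∧
      pseudoBipolar K (laurentTop K) (laurentPE K q k) = laurentPE K q k) ∧
    (∀ k : ℤ → WithBot (WithTop ℤ),
      {x : Mt K | mixedPairing K x ∈ pseudoPolar K (mixedTop K q) (mixedPE K q k)} =
        mixedPE K q (fun i => oneSubE (k (-i))) ∧
      pseudoBipolar K (mixedTop K q) (mixedPE K q k) = mixedPE K q k) :=
  ⟨fun k => ⟨laurent_polar hK k, laurent_bipolar hK k⟩,
   fun k => ⟨mixed_polar hK k, mixed_bipolar hK k⟩⟩

end TwoDimLF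
end
end
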